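/- arXiv:1908.03788 — 4 statements merged into one kernel-verified Lean document; each statement's English description precedes it below -/
import Mathlib

section
/- For every positive integer k and finite graph G, either G does not contain two vertex-disjoint, pairwise non-adjacent induced paths on k vertices, or G contains two vertex-disjoint pairwise non-adjacent induced paths on k vertices that are both avoidable in G. -/
variable {V : Type*}

/-- `p` is an induced path on `k` vertices in `G`: injective, and adjacency holds
exactly between consecutive vertices. -/
def IsInducedPathOn (G : SimpleGraph V) (k : ℕ) (p : Fin k → V) : Prop :=
  Function.Injective p ∧
    ∀ i j : Fin k, G.Adj (p i) (p j) ↔ (i.val + 1 = j.val ∨ j.val + 1 = i.val)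

/-- `c` is an induced cycle on `n ≥ 3` vertices in `G`: injective, and adjacency holds
exactly between cyclically consecutive vertices. -/
def IsInducedCycleOn (G : SimpleGraph V) (n : ℕ) (c : Fin n → V) : Prop :=
  3 ≤ n ∧ Function.Injective c ∧
    ∀ i j : Fin n, G.Adj (c i) (c j) ↔ ((i.val + 1) % n = j.val ∨ (j.val + 1) % n = i.val)

/-- The vertices of `q` all lie on some induced cycle of `G`. -/
def InInducedCycle (G : SimpleGraph V) {m : ℕ} (q : Fin m → V) : Prop :=
  ∃ (n : ℕ) (c : Fin n → V), IsInducedCycleOn G n c ∧ Set.range q ⊆ Set.range c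

/-- `q` is an extension of the induced path `p`: an induced path on `k+2` vertices
whose middle `k` vertices are `p` (one new vertex at each end). -/
def IsExtension (G : SimpleGraph V) {k : ℕ} (p : Fin k → V) (q : Fin (k + 2) → V) : Prop :=
  IsInducedPathOn G (k + 2) q ∧ ∀ i : Fin k, q i.succ.castSucc = p i

/-- `p` is an avoidable path in `G`: an induced path each of whose extensions lies on an
induced cycle of `G`. -/
def IsAvoidable (G : SimpleGraph V) {k : ℕ} (p : Fin k → V) : Prop :=
  IsInducedPathOn G k p ∧
    ∀ q : Fin (k + 2) → V, IsExtension G p q → InInducedCycle G q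

/-- `v` is an avoidable vertex: every induced path `x–v–y` lies on an induced cycle. -/
def AvoidableVertex (G : SimpleGraph V) (v : V) : Prop :=
  ∀ x y : V, G.Adj x v → G.Adj v y → x ≠ y → ¬ G.Adj x y → InInducedCycle G ![x, v, y]

/-- `v` lies outside the closed neighbourhood of `w`. -/
def OutsideClosedNbhd (G : SimpleGraph V) (w v : V) : Prop :=
  v ≠ w ∧ ¬ G.Adj w v

/-- Property `H_R(G,k,w)`: either `G − N[w]` has no induced path on `k` vertices,
or there is an induced path on `k` vertices inside `G − N[w]` avoidable in `G`. -/
def HR (G : SimpleGraph V) (k : ℕ) (w : V) : Prop :=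
  (¬ ∃ p : Fin k → V, IsInducedPathOn G k p ∧ ∀ i, OutsideClosedNbhd G w (p i)) ∨
  (∃ p : Fin k → V, IsInducedPathOn G k p ∧ (∀ i, OutsideClosedNbhd G w (p i)) ∧
    ∀ q : Fin (k + 2) → V, IsExtension G p q → InInducedCycle G q)

/-- The graph obtained from `G` by merging adjacent vertices `u₁, u₂` into one vertex
(represented by `u₁`, with `u₂` becoming an isolated stray vertex). -/
def mergeGraph (G : SimpleGraph V) (u₁ u₂ : V) : SimpleGraph V where
  Adj a b := a ≠ b ∧ a ≠ u₂ ∧ b ≠ u₂ ∧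
    (G.Adj a b ∨ (a = u₁ ∧ G.Adj u₂ b) ∨ (b = u₁ ∧ G.Adj a u₂))
  symm := by
    constructor
    rintro a b ⟨h1, h2, h3, h4⟩
    refine ⟨h1.symm, h3, h2, ?_⟩
    rcases h4 with h | ⟨ha, h⟩ | ⟨hb, h⟩
    · exact Or.inl h.symm
    · exact Or.inr (Or.inr ⟨ha, h.symm⟩)
    · exact Or.inr (Or.inl ⟨hb, h.symm⟩)
  loopless := ⟨fun a h => h.1 rfl⟩

/-- `G` is chordal: every induced cycle has exactly three vertices. -/
def Chordal (G : SimpleGraph V) : Prop :=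
  ∀ (n : ℕ) (c : Fin n → V), IsInducedCycleOn G n c → n = 3

/-- `v` is a simplicial vertex: its neighbourhood is a clique. -/
def SimplicialVertex (G : SimpleGraph V) (v : V) : Prop :=
  ∀ x y : V, G.Adj v x → G.Adj v y → x ≠ y → G.Adj x y

section Basics
variable {G G' : SimpleGraph V} {k m n : ℕ}

theorem path_transfer {p : Fin k → V}
    (h : ∀ a b, a ∈ Set.range p → b ∈ Set.range p → (G.Adj a b ↔ G'.Adj a b))
    (hp : IsInducedPathOn G k p) : IsInducedPathOn G' k p := by
  refine ⟨hp.1, fun i j => ?_⟩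
  rw [← h _ _ ⟨i, rfl⟩ ⟨j, rfl⟩]; exact hp.2 i j

theorem cycle_transfer {c : Fin n → V}
    (h : ∀ a b, a ∈ Set.range c → b ∈ Set.range c → (G.Adj a b ↔ G'.Adj a b))
    (hc : IsInducedCycleOn G n c) : IsInducedCycleOn G' n c := by
  refine ⟨hc.1, hc.2.1, fun i j => ?_⟩
  rw [← h _ _ ⟨i, rfl⟩ ⟨j, rfl⟩]; exact hc.2.2 i j

theorem path_seg {q : Fin m → V} (hq : IsInducedPathOn G m q) (t : ℕ) (h : t + k ≤ m) :
    IsInducedPathOn G k (fun i : Fin k => q ⟨t + i.val, by omega⟩) := by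
  constructor
  · intro i j hij
    have := hq.1 hij
    have : t + i.val = t + j.val := congrArg Fin.val this
    exact Fin.ext (by omega)
  · intro i j
    rw [hq.2]
    simp only [Fin.val]
    omega

theorem path_rev {q : Fin m → V} (hq : IsInducedPathOn G m q) :
    IsInducedPathOn G m (fun i => q i.rev) := by
  constructor
  · intro i j hij
    have := congrArg Fin.val (hq.1 hij)
    simp only [Fin.val_rev] at this
    exact Fin.ext (by omega)
  · intro i j
    rw [hq.2]
    have hi := i.isLt; have hj := j.isLt
    simp only [Fin.val_rev]
    omega

theorem succ_mod_eq {x n : ℕ} (h : x < n) :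
    (x + 1) % n = if x + 1 = n then 0 else x + 1 := by
  split
  · next h => rw [h, Nat.mod_self]
  · next h => exact Nat.mod_eq_of_lt (by omega)

/-- Closing an induced path with an apex vertex adjacent exactly to its two ends gives
an induced cycle. -/
theorem cycle_of_apex {q : Fin m → V} (hm : 2 ≤ m) (hq : IsInducedPathOn G m q) (w : V)
    (hw0 : G.Adj w (q ⟨0, by omega⟩)) (hwl : G.Adj w (q ⟨m - 1, by omega⟩))
    (hwm : ∀ i : Fin m, i.val ≠ 0 → i.val ≠ m - 1 → ¬ G.Adj w (q i))
    (hwr : w ∉ Set.range q) :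
    IsInducedCycleOn G (m + 1) (fun i : Fin (m + 1) =>
      if h : i.val < m then q ⟨i.val, h⟩ else w) ∧
    Set.range q ⊆ Set.range (fun i : Fin (m + 1) =>
      if h : i.val < m then q ⟨i.val, h⟩ else w) := by
  set c : Fin (m+1) → V := fun i : Fin (m + 1) =>
      if h : i.val < m then q ⟨i.val, h⟩ else w with hc
  have hcq : ∀ (i : Fin (m+1)) (h : i.val < m), c i = q ⟨i.val, h⟩ := by
    intro i h; simp [hc, h]
  have hcw : ∀ (i : Fin (m+1)), ¬ i.val < m → c i = w := by
    intro i h; simp [hc, h]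
  have hwq : ∀ (j : Fin m), w ≠ q j := by
    intro j he; exact hwr ⟨j, he.symm⟩
  constructor
  · refine ⟨by omega, ?_, ?_⟩
    · intro i j hij
      by_cases hi : i.val < m <;> by_cases hj : j.val < m
      · rw [hcq i hi, hcq j hj] at hij
        have := congrArg Fin.val (hq.1 hij); exact Fin.ext (by simpa using this)
      · rw [hcq i hi, hcw j hj] at hij; exact absurd hij.symm (hwq _)
      · rw [hcw i hi, hcq j hj] at hij; exact absurd hij (hwq _)
      · exact Fin.ext (by omega)
    · intro i j
      have hi := i.isLt; have hj := j.isLt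
      have hmi := succ_mod_eq (n := m+1) i.isLt
      have hmj := succ_mod_eq (n := m+1) j.isLt
      by_cases hic : i.val < m <;> by_cases hjc : j.val < m
      · rw [hcq i hic, hcq j hjc, hq.2]
        have e1 : ((⟨i.val, hic⟩ : Fin m)).val = i.val := rfl
        have e2 : ((⟨j.val, hjc⟩ : Fin m)).val = j.val := rfl
        rw [e1, e2]
        constructor
        · rintro (h | h) <;> [left; right] <;> simp only [hmi, hmj] <;> split <;> omega
        · rintro (h | h)
          · rw [hmi] at h; left; split at h <;> omega
          · rw [hmj] at h; right; split at h <;> omega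
      · have hj' : j.val = m := by omega
        rw [hcq i hic, hcw j hjc, G.adj_comm]
        constructor
        · intro hadj
          by_cases h0 : i.val = 0
          · right; rw [hmj]; split <;> omega
          · by_cases hl : i.val = m - 1
            · left; rw [hmi]; split <;> omega
            · exact absurd hadj (hwm ⟨i.val, hic⟩ h0 hl)
        · rintro (h1 | h2)
          · rw [hmi] at h1
            have : i.val = m - 1 := by split at h1 <;> omega
            convert hwl using 2; exact Fin.ext this
          · rw [hmj] at h2
            have : i.val = 0 := by split at h2 <;> omega
            convert hw0 using 2; exact Fin.ext this
      · have hi' : i.val = m := by omega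
        rw [hcw i hic, hcq j hjc]
        constructor
        · intro hadj
          by_cases h0 : j.val = 0
          · left; rw [hmi]; split <;> omega
          · by_cases hl : j.val = m - 1
            · right; rw [hmj]; split <;> omega
            · exact absurd hadj (hwm ⟨j.val, hjc⟩ h0 hl)
        · rintro (h1 | h2)
          · rw [hmi] at h1
            have : j.val = 0 := by split at h1 <;> omega
            convert hw0 using 2; exact Fin.ext this
          · rw [hmj] at h2
            have : j.val = m - 1 := by split at h2 <;> omega
            convert hwl using 2; exact Fin.ext this
      · rw [hcw i hic, hcw j hjc]
        simp only [SimpleGraph.irrefl, false_iff]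
        rw [hmi, hmj]; split <;> split <;> omega
  · rintro v ⟨i, rfl⟩
    exact ⟨⟨i.val, by omega⟩, by simp [hc, i.isLt]⟩

end Basics

section Merge
variable {G : SimpleGraph V} {w u : V}

theorem merge_adj {u₁ u₂ a b : V} : (mergeGraph G u₁ u₂).Adj a b ↔ a ≠ b ∧ a ≠ u₂ ∧ b ≠ u₂ ∧
    (G.Adj a b ∨ (a = u₁ ∧ G.Adj u₂ b) ∨ (b = u₁ ∧ G.Adj a u₂)) := Iff.rfl

theorem merge_adj_of_ne {u₁ u₂ a b : V} (ha : a ≠ u₁) (hb : b ≠ u₁) :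
    (mergeGraph G u₁ u₂).Adj a b ↔ (G.Adj a b ∧ a ≠ u₂ ∧ b ≠ u₂) := by
  rw [merge_adj]
  constructor
  · rintro ⟨h1, h2, h3, h | ⟨rfl, h⟩ | ⟨rfl, h⟩⟩
    · exact ⟨h, h2, h3⟩
    · exact absurd rfl ha
    · exact absurd rfl hb
  · rintro ⟨h, h2, h3⟩
    exact ⟨h.ne, h2, h3, Or.inl h⟩

theorem merge_not_adj_stray {u₁ u₂ b : V} : ¬ (mergeGraph G u₁ u₂).Adj u₂ b :=
  fun h => h.2.1 rfl

theorem merge_not_adj_stray' {u₁ u₂ a : V} : ¬ (mergeGraph G u₁ u₂).Adj a u₂ :=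
  fun h => h.2.2.1 rfl

/-- number of adjacent ordered pairs -/
noncomputable def gsize (G : SimpleGraph V) : ℕ := Set.ncard {p : V × V | G.Adj p.1 p.2}

def delVert (G : SimpleGraph V) (u : V) : SimpleGraph V where
  Adj a b := G.Adj a b ∧ a ≠ u ∧ b ≠ u
  symm := ⟨fun a b ⟨h, h1, h2⟩ => ⟨h.symm, h2, h1⟩⟩
  loopless := ⟨fun a h => G.irrefl h.1⟩

theorem delVert_adj {a b : V} : (delVert G u).Adj a b ↔ G.Adj a b ∧ a ≠ u ∧ b ≠ u := Iff.rfl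

theorem gsize_delVert_lt [Finite V] (h : ∃ b, G.Adj u b) :
    gsize (delVert G u) < gsize G := by
  apply Set.ncard_lt_ncard _ (Set.toFinite _)
  obtain ⟨b, hb⟩ := h
  constructor
  · rintro ⟨a, b⟩ hab; exact hab.1
  · intro hsub
    have h1 : ((u, b) : V × V) ∈ {p : V × V | G.Adj p.1 p.2} := hb
    have h2 := hsub h1
    exact h2.2.1 rfl

theorem gsize_merge_lt [Finite V] (hwu : G.Adj w u) :
    gsize (mergeGraph G w u) < gsize G := by
  classical
  have hne : w ≠ u := hwu.ne
  set A : Set (V × V) := {p | (mergeGraph G w u).Adj p.1 p.2} with hA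
  set B : Set (V × V) := {p | G.Adj p.1 p.2} with hB
  set f : V × V → V × V := fun p => if G.Adj p.1 p.2 then p else if p.1 = w then (u, p.2) else (p.1, u) with hf
  have hfval : ∀ a b : V, f (a, b) = if G.Adj a b then (a, b) else if a = w then (u, b) else (a, u) := fun a b => rfl
  have hmaps : Set.MapsTo f A (B \ {(w, u)}) := by
    rintro ⟨a, b⟩ hab
    obtain ⟨h1, h2, h3, hd⟩ := hab
    rw [Set.mem_diff, Set.mem_singleton_iff]
    by_cases hadj : G.Adj a b
    · rw [hfval, if_pos hadj]
      refine ⟨hadj, fun hc => ?_⟩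
      rw [Prod.mk.injEq] at hc
      exact h3 hc.2
    · rcases hd with hd | ⟨haw, hd⟩ | ⟨hbw, hd⟩
      · exact absurd hd hadj
      · rw [hfval, if_neg hadj, if_pos haw]
        refine ⟨hd, fun hc => ?_⟩
        rw [Prod.mk.injEq] at hc
        exact hne.symm hc.1
      · have haw : a ≠ w := fun hc => h1 (hc.trans hbw.symm)
        rw [hfval, if_neg hadj, if_neg haw]
        refine ⟨hd, fun hc => ?_⟩
        rw [Prod.mk.injEq] at hc
        exact haw hc.1
  have hinj : Set.InjOn f A := by
    rintro ⟨a, b⟩ ha ⟨a', b'⟩ ha' heq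
    obtain ⟨h1, h2, h3, hd⟩ := ha
    obtain ⟨h1', h2', h3', hd'⟩ := ha'
    replace h1 : a ≠ b := h1
    replace h2 : a ≠ u := h2
    replace h3 : b ≠ u := h3
    replace h1' : a' ≠ b' := h1'
    replace h2' : a' ≠ u := h2'
    replace h3' : b' ≠ u := h3'
    replace hd : G.Adj a b ∨ (a = w ∧ G.Adj u b) ∨ (b = w ∧ G.Adj a u) := hd
    replace hd' : G.Adj a' b' ∨ (a' = w ∧ G.Adj u b') ∨ (b' = w ∧ G.Adj a' u) := hd'
    rw [hfval, hfval] at heq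
    rw [Prod.mk.injEq]
    by_cases e1 : G.Adj a b
    · rw [if_pos e1] at heq
      by_cases e2 : G.Adj a' b'
      · rw [if_pos e2, Prod.mk.injEq] at heq; exact heq
      · rw [if_neg e2] at heq
        split at heq <;> rw [Prod.mk.injEq] at heq
        · exact absurd heq.1 h2
        · exact absurd heq.2 h3
    · rw [if_neg e1] at heq
      by_cases e2 : G.Adj a' b'
      · rw [if_pos e2] at heq
        split at heq <;> rw [Prod.mk.injEq] at heq
        · exact absurd heq.1.symm h2'
        · exact absurd heq.2.symm h3'
      · rw [if_neg e2] at heq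
        split at heq <;> split at heq <;> rw [Prod.mk.injEq] at heq
        · next hw hw' => exact ⟨hw.trans hw'.symm, heq.2⟩
        · next hw hw' => exact absurd heq.2 h3
        · next hw hw' => exact absurd heq.2.symm h3'
        · next hw hw' =>
            rcases hd with hd | ⟨haw, _⟩ | ⟨hbw, _⟩
            · exact absurd hd e1
            · exact absurd haw hw
            · rcases hd' with hd' | ⟨haw', _⟩ | ⟨hbw', _⟩
              · exact absurd hd' e2
              · exact absurd haw' hw'
              · exact ⟨heq.1, hbw.trans hbw'.symm⟩
  calc gsize (mergeGraph G w u) = A.ncard := rfl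
    _ ≤ (B \ {(w, u)}).ncard := Set.ncard_le_ncard_of_injOn f hmaps hinj (Set.toFinite _)
    _ < B.ncard := by
        apply Set.ncard_lt_ncard _ (Set.toFinite _)
        constructor
        · exact Set.diff_subset
        · intro hsub
          have : ((w, u) : V × V) ∈ B := hwu
          exact ((hsub this).2 rfl).elim
    _ = gsize G := rfl

end Merge

section CycleSurgery
variable {G : SimpleGraph V} {n : ℕ}

theorem rotmod {n a b t : ℕ} (hb : b < n) :
    ((a + t) % n + 1) % n = (b + t) % n ↔ (a + 1) % n = b := by
  rw [Nat.mod_add_mod]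
  have e : a + t + 1 = a + 1 + t := by omega
  rw [e]
  constructor
  · intro h
    have h2 : a + 1 ≡ b [MOD n] := Nat.ModEq.add_right_cancel' t h
    rw [Nat.ModEq] at h2
    rw [h2, Nat.mod_eq_of_lt hb]
  · intro h
    have h2 : a + 1 ≡ b [MOD n] := by rw [Nat.ModEq, h, Nat.mod_eq_of_lt hb]
    exact h2.add_right t

theorem cycle_rotate {c : Fin n → V} (hc : IsInducedCycleOn G n c) (t : Fin n) :
    IsInducedCycleOn G n (fun i => c (i + t)) ∧
      Set.range (fun i => c (i + t)) = Set.range c := by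
  have hadd : ∀ i t : Fin n, (i + t).val = (i.val + t.val) % n := fun i t => Fin.val_add i t ▸ rfl
  constructor
  · refine ⟨hc.1, fun i j hij => ?_, fun i j => ?_⟩
    · have := hc.2.1 hij
      have h2 : i + t = j + t := this
      haveI : NeZero n := ⟨by have := hc.1; omega⟩
      exact add_right_cancel h2
    · rw [hc.2.2 (i + t) (j + t)]
      rw [hadd, hadd]
      rw [rotmod j.isLt, rotmod i.isLt]
  · apply Set.eq_of_subset_of_subset
    · rintro v ⟨i, rfl⟩; exact ⟨i + t, rfl⟩
    · rintro v ⟨i, rfl⟩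
      haveI : NeZero n := ⟨by have := hc.1; omega⟩
      refine ⟨i - t, ?_⟩
      show c (i - t + t) = c i
      rw [sub_add_cancel]

/-- Appending a new vertex `u` to a "broken cycle" gives an induced cycle. -/
theorem cycle_append {c : Fin n → V} (hn : 3 ≤ n) (hinj : Function.Injective c)
    (H1 : ∀ i j : Fin n, ¬(i.val = n - 1 ∧ j.val = 0) → ¬(i.val = 0 ∧ j.val = n - 1) →
      (G.Adj (c i) (c j) ↔ ((i.val + 1) % n = j.val ∨ (j.val + 1) % n = i.val)))
    (u : V) (hur : u ∉ Set.range c)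
    (H2 : ¬ G.Adj (c ⟨n - 1, by omega⟩) (c ⟨0, by omega⟩))
    (H3 : G.Adj u (c ⟨0, by omega⟩)) (H4 : G.Adj u (c ⟨n - 1, by omega⟩))
    (H5 : ∀ i : Fin n, i.val ≠ 0 → i.val ≠ n - 1 → ¬ G.Adj u (c i)) :
    IsInducedCycleOn G (n + 1) (fun i : Fin (n + 1) =>
      if h : i.val < n then c ⟨i.val, h⟩ else u) ∧
    Set.range c ⊆ Set.range (fun i : Fin (n + 1) =>
      if h : i.val < n then c ⟨i.val, h⟩ else u) := by
  set c' : Fin (n+1) → V := fun i : Fin (n + 1) =>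
      if h : i.val < n then c ⟨i.val, h⟩ else u with hc'
  have hcq : ∀ (i : Fin (n+1)) (h : i.val < n), c' i = c ⟨i.val, h⟩ := by
    intro i h; simp [hc', h]
  have hcu : ∀ (i : Fin (n+1)), ¬ i.val < n → c' i = u := by
    intro i h; simp [hc', h]
  have huq : ∀ (j : Fin n), u ≠ c j := fun j he => hur ⟨j, he.symm⟩
  constructor
  · refine ⟨by omega, ?_, ?_⟩
    · intro i j hij
      by_cases hi : i.val < n <;> by_cases hj : j.val < n
      · rw [hcq i hi, hcq j hj] at hij
        have := congrArg Fin.val (hinj hij); exact Fin.ext (by simpa using this)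
      · rw [hcq i hi, hcu j hj] at hij; exact absurd hij.symm (huq _)
      · rw [hcu i hi, hcq j hj] at hij; exact absurd hij (huq _)
      · exact Fin.ext (by omega)
    · intro i j
      have hi := i.isLt; have hj := j.isLt
      have hmi := succ_mod_eq (n := n+1) i.isLt
      have hmj := succ_mod_eq (n := n+1) j.isLt
      by_cases hic : i.val < n <;> by_cases hjc : j.val < n
      · rw [hcq i hic, hcq j hjc]
        have hmi' := succ_mod_eq (n := n) hic
        have hmj' := succ_mod_eq (n := n) hjc
        by_cases hw1 : i.val = n - 1 ∧ j.val = 0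
        · have hadj : ¬ G.Adj (c ⟨i.val, hic⟩) (c ⟨j.val, hjc⟩) := by
            rw [show (⟨i.val, hic⟩ : Fin n) = ⟨n-1, by omega⟩ from Fin.ext hw1.1,
              show (⟨j.val, hjc⟩ : Fin n) = ⟨0, by omega⟩ from Fin.ext hw1.2]
            exact H2
          constructor
          · intro h; exact absurd h hadj
          · rintro (h | h)
            · rw [hmi] at h; split at h <;> omega
            · rw [hmj] at h; split at h <;> omega
        · by_cases hw2 : i.val = 0 ∧ j.val = n - 1
          · have hadj : ¬ G.Adj (c ⟨i.val, hic⟩) (c ⟨j.val, hjc⟩) := by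
              rw [show (⟨i.val, hic⟩ : Fin n) = ⟨0, by omega⟩ from Fin.ext hw2.1,
                show (⟨j.val, hjc⟩ : Fin n) = ⟨n-1, by omega⟩ from Fin.ext hw2.2, G.adj_comm]
              exact H2
            constructor
            · intro h; exact absurd h hadj
            · rintro (h | h)
              · rw [hmi] at h; split at h <;> omega
              · rw [hmj] at h; split at h <;> omega
          · rw [H1 _ _ hw1 hw2]
            have e1 : ((⟨i.val, hic⟩ : Fin n)).val = i.val := rfl
            have e2 : ((⟨j.val, hjc⟩ : Fin n)).val = j.val := rfl
            rw [e1, e2, hmi, hmj, hmi', hmj']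
            split <;> split <;> split <;> split <;> omega
      · -- j is the new vertex u
        have hj' : j.val = n := by omega
        rw [hcq i hic, hcu j hjc, G.adj_comm]
        constructor
        · intro hadj
          by_cases h0 : i.val = 0
          · right; rw [hmj]; split <;> omega
          · by_cases hl : i.val = n - 1
            · left; rw [hmi]; split <;> omega
            · exact absurd hadj (H5 ⟨i.val, hic⟩ h0 hl)
        · rintro (h1 | h2)
          · rw [hmi] at h1
            have : i.val = n - 1 := by split at h1 <;> omega
            convert H4 using 2; exact Fin.ext this
          · rw [hmj] at h2
            have : i.val = 0 := by split at h2 <;> omega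
            convert H3 using 2; exact Fin.ext this
      · have hi' : i.val = n := by omega
        rw [hcu i hic, hcq j hjc]
        constructor
        · intro hadj
          by_cases h0 : j.val = 0
          · left; rw [hmi]; split <;> omega
          · by_cases hl : j.val = n - 1
            · right; rw [hmj]; split <;> omega
            · exact absurd hadj (H5 ⟨j.val, hjc⟩ h0 hl)
        · rintro (h1 | h2)
          · rw [hmi] at h1
            have : j.val = 0 := by split at h1 <;> omega
            convert H3 using 2; exact Fin.ext this
          · rw [hmj] at h2
            have : j.val = n - 1 := by split at h2 <;> omega
            convert H4 using 2; exact Fin.ext this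
      · rw [hcu i hic, hcu j hjc]
        simp only [SimpleGraph.irrefl, false_iff]
        rw [hmi, hmj]; split <;> split <;> omega
  · rintro v ⟨i, rfl⟩
    exact ⟨⟨i.val, by omega⟩, by simp [hc', i.isLt]⟩

/-- Replacing the vertex at position 0 of a near-induced-cycle by a new vertex `u`. -/
theorem cycle_update {c : Fin n → V} (hn : 3 ≤ n) (hinj : Function.Injective c)
    (H1 : ∀ i j : Fin n, i.val ≠ 0 → j.val ≠ 0 →
      (G.Adj (c i) (c j) ↔ ((i.val + 1) % n = j.val ∨ (j.val + 1) % n = i.val)))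
    (u : V) (hur : ∀ j : Fin n, j.val ≠ 0 → u ≠ c j)
    (H3 : G.Adj u (c ⟨1, by omega⟩)) (H4 : G.Adj u (c ⟨n - 1, by omega⟩))
    (H5 : ∀ j : Fin n, j.val ≠ 0 → j.val ≠ 1 → j.val ≠ n - 1 → ¬ G.Adj u (c j)) :
    IsInducedCycleOn G n (fun i => if i.val = 0 then u else c i) ∧
    ∀ j : Fin n, j.val ≠ 0 → c j ∈ Set.range (fun i : Fin n => if i.val = 0 then u else c i) := by
  set c' : Fin n → V := fun i => if i.val = 0 then u else c i with hc'
  have hcq : ∀ (i : Fin n), i.val ≠ 0 → c' i = c i := by intro i h; simp [hc', h]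
  have hcu : ∀ (i : Fin n), i.val = 0 → c' i = u := by intro i h; simp [hc', h]
  have huq : ∀ (j : Fin n), j.val ≠ 0 → u ≠ c j := hur
  constructor
  · refine ⟨hn, ?_, ?_⟩
    · intro i j hij
      by_cases hi : i.val = 0 <;> by_cases hj : j.val = 0
      · exact Fin.ext (by omega)
      · rw [hcu i hi, hcq j hj] at hij; exact absurd hij (huq _ hj)
      · rw [hcq i hi, hcu j hj] at hij; exact absurd hij.symm (huq _ hi)
      · rw [hcq i hi, hcq j hj] at hij; exact hinj hij
    · intro i j
      have hi := i.isLt; have hj := j.isLt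
      have hmi := succ_mod_eq (n := n) i.isLt
      have hmj := succ_mod_eq (n := n) j.isLt
      by_cases hic : i.val = 0 <;> by_cases hjc : j.val = 0
      · rw [hcu i hic, hcu j hjc]
        simp only [SimpleGraph.irrefl, false_iff]
        rw [hmi, hmj]; split <;> split <;> omega
      · rw [hcu i hic, hcq j hjc]
        constructor
        · intro hadj
          by_cases h1 : j.val = 1
          · left; rw [hmi]; split <;> omega
          · by_cases hl : j.val = n - 1
            · right; rw [hmj]; split <;> omega
            · exact absurd hadj (H5 j hjc h1 hl)
        · rintro (h | h)
          · rw [hmi] at h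
            have : j.val = 1 := by split at h <;> omega
            convert H3 using 2; exact Fin.ext this
          · rw [hmj] at h
            have : j.val = n - 1 := by split at h <;> omega
            convert H4 using 2; exact Fin.ext this
      · rw [hcq i hic, hcu j hjc, G.adj_comm]
        constructor
        · intro hadj
          by_cases h1 : i.val = 1
          · right; rw [hmj]; split <;> omega
          · by_cases hl : i.val = n - 1
            · left; rw [hmi]; split <;> omega
            · exact absurd hadj (H5 i hic h1 hl)
        · rintro (h | h)
          · rw [hmi] at h
            have : i.val = n - 1 := by split at h <;> omega
            convert H4 using 2; exact Fin.ext this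
          · rw [hmj] at h
            have : i.val = 1 := by split at h <;> omega
            convert H3 using 2; exact Fin.ext this
      · rw [hcq i hic, hcq j hjc]; exact H1 i j hic hjc
  · intro j hj
    exact ⟨j, (hcq j hj)⟩

end CycleSurgery

/-- Inserting a new vertex `u` between positions 0 and 1 of a cycle whose edge 0–1
has been broken. -/
theorem cycle_insert1 {G : SimpleGraph V} {n : ℕ} {c : Fin n → V} (hn : 3 ≤ n)
    (hinj : Function.Injective c)
    (H1 : ∀ i j : Fin n, ¬(i.val = 0 ∧ j.val = 1) → ¬(i.val = 1 ∧ j.val = 0) →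
      (G.Adj (c i) (c j) ↔ ((i.val + 1) % n = j.val ∨ (j.val + 1) % n = i.val)))
    (u : V) (hur : u ∉ Set.range c)
    (H2 : ¬ G.Adj (c ⟨0, by omega⟩) (c ⟨1, by omega⟩))
    (H3 : G.Adj u (c ⟨0, by omega⟩)) (H4 : G.Adj u (c ⟨1, by omega⟩))
    (H5 : ∀ i : Fin n, i.val ≠ 0 → i.val ≠ 1 → ¬ G.Adj u (c i)) :
    ∃ c' : Fin (n + 1) → V, IsInducedCycleOn G (n + 1) c' ∧
      Set.range c ⊆ Set.range c' := by
  set c' : Fin (n + 1) → V := fun i =>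
    if h0 : i.val = 0 then c ⟨0, by omega⟩
    else if h1 : i.val = 1 then u
    else c ⟨i.val - 1, by omega⟩ with hc'
  have hv0 : ∀ i : Fin (n + 1), i.val = 0 → c' i = c ⟨0, by omega⟩ := by
    intro i h; simp [hc', h]
  have hv1 : ∀ i : Fin (n + 1), i.val = 1 → c' i = u := by
    intro i h; rw [hc']; simp only []
    rw [dif_neg (by omega), dif_pos h]
  have hv2 : ∀ i : Fin (n + 1), ∀ _h : 2 ≤ i.val, c' i = c ⟨i.val - 1, by omega⟩ := by
    intro i h; rw [hc']; simp only []
    rw [dif_neg (by omega), dif_neg (by omega)]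
  have huq : ∀ (j : Fin n), u ≠ c j := fun j he => hur ⟨j, he.symm⟩
  refine ⟨c', ⟨by omega, ?_, ?_⟩, ?_⟩
  · -- injectivity
    intro i j hij
    rcases Nat.lt_or_ge i.val 2 with hi2 | hi2 <;> rcases Nat.lt_or_ge j.val 2 with hj2 | hj2
    · by_cases hi : i.val = 0 <;> by_cases hj : j.val = 0
      · exact Fin.ext (by omega)
      · rw [hv0 i hi, hv1 j (by omega)] at hij; exact absurd hij.symm (huq _)
      · rw [hv1 i (by omega), hv0 j hj] at hij; exact absurd hij (huq _)
      · exact Fin.ext (by omega)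
    · by_cases hi : i.val = 0
      · rw [hv0 i hi, hv2 j hj2] at hij
        have := congrArg Fin.val (hinj hij)
        exact absurd this.symm (by show ¬ (j.val - 1 = 0); omega)
      · rw [hv1 i (by omega), hv2 j hj2] at hij; exact absurd hij (huq _)
    · by_cases hj : j.val = 0
      · rw [hv2 i hi2, hv0 j hj] at hij
        have := congrArg Fin.val (hinj hij)
        exact absurd this (by show ¬ (i.val - 1 = 0); omega)
      · rw [hv2 i hi2, hv1 j (by omega)] at hij; exact absurd hij.symm (huq _)
    · rw [hv2 i hi2, hv2 j hj2] at hij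
      have := congrArg Fin.val (hinj hij)
      have hh : i.val - 1 = j.val - 1 := this
      exact Fin.ext (by omega)
  · -- adjacency iff
    intro i j
    have hi := i.isLt; have hj := j.isLt
    have hmi := succ_mod_eq (n := n + 1) i.isLt
    have hmj := succ_mod_eq (n := n + 1) j.isLt
    rcases Nat.lt_or_ge i.val 2 with hi2 | hi2 <;> rcases Nat.lt_or_ge j.val 2 with hj2 | hj2
    · -- both i,j in {0,1}
      by_cases hi0 : i.val = 0 <;> by_cases hj0 : j.val = 0
      · have : i = j := Fin.ext (by omega)
        subst this
        simp only [SimpleGraph.irrefl, false_iff]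
        rw [hmi]; split <;> omega
      · rw [hv0 i hi0, hv1 j (by omega), G.adj_comm]
        constructor
        · intro _; left; rw [hmi]; split <;> omega
        · intro _; exact H3
      · rw [hv1 i (by omega), hv0 j hj0]
        constructor
        · intro _; right; rw [hmj]; split <;> omega
        · intro _; exact H3
      · have : i = j := Fin.ext (by omega)
        subst this
        simp only [SimpleGraph.irrefl, false_iff]
        rw [hmi]; split <;> omega
    · -- i in {0,1}, j ≥ 2
      by_cases hi0 : i.val = 0
      · rw [hv0 i hi0, hv2 j hj2]
        by_cases hj2' : j.val = 2
        · have : (⟨j.val - 1, by omega⟩ : Fin n) = ⟨1, by omega⟩ := Fin.ext (by show j.val - 1 = 1; omega)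
          rw [this]
          constructor
          · intro hadj; exact absurd hadj H2
          · rintro (h | h)
            · rw [hmi] at h; split at h <;> omega
            · rw [hmj] at h; split at h <;> omega
        · rw [H1 ⟨0, by omega⟩ ⟨j.val - 1, by omega⟩ (by show ¬((0:ℕ) = 0 ∧ j.val - 1 = 1); omega)
            (by show ¬((0:ℕ) = 1 ∧ j.val - 1 = 0); omega)]
          have e0 : ((⟨0, by omega⟩ : Fin n)).val = 0 := rfl
          have e1 : ((⟨j.val - 1, by omega⟩ : Fin n)).val = j.val - 1 := rfl
          rw [e0, e1, hmi, hmj]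
          have em : (0 + 1) % n = 1 := Nat.mod_eq_of_lt (by omega)
          have em2 := succ_mod_eq (n := n) (show j.val - 1 < n by omega)
          rw [em, em2]
          split <;> split <;> split <;> omega
      · have hi1 : i.val = 1 := by omega
        rw [hv1 i hi1, hv2 j hj2]
        constructor
        · intro hadj
          by_cases hj2' : j.val = 2
          · left; rw [hmi]; split <;> omega
          · exact absurd hadj (H5 ⟨j.val - 1, by omega⟩ (by show ¬(j.val - 1 = 0); omega)
              (by show ¬(j.val - 1 = 1); omega))
        · rintro (h | h)
          · rw [hmi] at h
            have : j.val = 2 := by split at h <;> omega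
            have e : (⟨j.val - 1, by omega⟩ : Fin n) = ⟨1, by omega⟩ := Fin.ext (by show j.val - 1 = 1; omega)
            rw [e]; exact H4
          · rw [hmj] at h; split at h <;> omega
    · -- i ≥ 2, j in {0,1}
      by_cases hj0 : j.val = 0
      · rw [hv2 i hi2, hv0 j hj0, G.adj_comm]
        by_cases hi2' : i.val = 2
        · have e : (⟨i.val - 1, by omega⟩ : Fin n) = ⟨1, by omega⟩ := Fin.ext (by show i.val - 1 = 1; omega)
          rw [e]
          constructor
          · intro hadj; exact absurd hadj H2
          · rintro (h | h)
            · rw [hmi] at h; split at h <;> omega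
            · rw [hmj] at h; split at h <;> omega
        · rw [H1 ⟨0, by omega⟩ ⟨i.val - 1, by omega⟩ (by show ¬((0:ℕ) = 0 ∧ i.val - 1 = 1); omega)
            (by show ¬((0:ℕ) = 1 ∧ i.val - 1 = 0); omega)]
          have e0 : ((⟨0, by omega⟩ : Fin n)).val = 0 := rfl
          have e1 : ((⟨i.val - 1, by omega⟩ : Fin n)).val = i.val - 1 := rfl
          rw [e0, e1, hmi, hmj]
          have em : (0 + 1) % n = 1 := Nat.mod_eq_of_lt (by omega)
          have em2 := succ_mod_eq (n := n) (show i.val - 1 < n by omega)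
          rw [em, em2]
          split <;> split <;> split <;> omega
      · have hj1 : j.val = 1 := by omega
        rw [hv2 i hi2, hv1 j hj1, G.adj_comm]
        constructor
        · intro hadj
          by_cases hi2' : i.val = 2
          · right; rw [hmj]; split <;> omega
          · exact absurd hadj (H5 ⟨i.val - 1, by omega⟩ (by show ¬(i.val - 1 = 0); omega)
              (by show ¬(i.val - 1 = 1); omega))
        · rintro (h | h)
          · rw [hmi] at h; split at h <;> omega
          · rw [hmj] at h
            have : i.val = 2 := by split at h <;> omega
            have e : (⟨i.val - 1, by omega⟩ : Fin n) = ⟨1, by omega⟩ := Fin.ext (by show i.val - 1 = 1; omega)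
            rw [e]; exact H4
    · -- both ≥ 2
      rw [hv2 i hi2, hv2 j hj2]
      rw [H1 ⟨i.val - 1, by omega⟩ ⟨j.val - 1, by omega⟩
        (by show ¬(i.val - 1 = 0 ∧ j.val - 1 = 1); omega)
        (by show ¬(i.val - 1 = 1 ∧ j.val - 1 = 0); omega)]
      have e1 : ((⟨i.val - 1, by omega⟩ : Fin n)).val = i.val - 1 := rfl
      have e2 : ((⟨j.val - 1, by omega⟩ : Fin n)).val = j.val - 1 := rfl
      rw [e1, e2, hmi, hmj]
      have em1 := succ_mod_eq (n := n) (show i.val - 1 < n by omega)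
      have em2 := succ_mod_eq (n := n) (show j.val - 1 < n by omega)
      rw [em1, em2]
      split <;> split <;> split <;> split <;> omega
  · -- coverage
    rintro v ⟨t, rfl⟩
    by_cases ht : t.val = 0
    · refine ⟨⟨0, by omega⟩, ?_⟩
      rw [hv0 ⟨0, by omega⟩ rfl]
      exact congrArg c (Fin.ext (show (0:ℕ) = t.val by omega))
    · refine ⟨⟨t.val + 1, by omega⟩, ?_⟩
      rw [hv2 ⟨t.val + 1, by omega⟩ (by show 2 ≤ t.val + 1; omega)]
      exact congrArg c (Fin.ext (show t.val + 1 - 1 = t.val by omega))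


section Lift
variable {G : SimpleGraph V} {w u : V} {k n : ℕ}

theorem merge_htr {a b : V} (ha1 : a ≠ w) (ha2 : a ≠ u) (hb1 : b ≠ w) (hb2 : b ≠ u) :
    G.Adj a b ↔ (mergeGraph G w u).Adj a b := by
  rw [merge_adj_of_ne ha1 hb1]
  exact ⟨fun h => ⟨h, ha2, hb2⟩, fun h => h.1⟩

theorem merge_w_adj {z : V} (hz1 : z ≠ w) (hz2 : z ≠ u) (hwu : w ≠ u) :
    (mergeGraph G w u).Adj w z ↔ (G.Adj w z ∨ G.Adj u z) := by
  rw [merge_adj]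
  constructor
  · rintro ⟨h1, h2, h3, h | ⟨_, h⟩ | ⟨hzw, h⟩⟩
    · exact Or.inl h
    · exact Or.inr h
    · exact absurd hzw hz1
  · rintro (h | h)
    · exact ⟨h.ne, hwu, hz2, Or.inl h⟩
    · exact ⟨Ne.symm hz1, hwu, hz2, Or.inr (Or.inl ⟨rfl, h⟩)⟩

/-- The key lifting lemma: an avoidable path in the merge of an edge `wu`, which is
disjoint from and non-adjacent to both `w` and `u`, is avoidable in `G`. -/
theorem merge_lift (hwu : G.Adj w u) (hk : 1 ≤ k) {p : Fin k → V}
    (hpu : ∀ i, ¬ G.Adj (p i) u ∧ p i ≠ u) (hpw : ∀ i, ¬ G.Adj (p i) w ∧ p i ≠ w)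
    (hav : IsAvoidable (mergeGraph G w u) p) : IsAvoidable G p := by
  set G₁ := mergeGraph G w u with hG₁
  have hne : w ≠ u := hwu.ne
  have htr : ∀ a b : V, a ≠ w → a ≠ u → b ≠ w → b ≠ u → (G.Adj a b ↔ G₁.Adj a b) :=
    fun a b h1 h2 h3 h4 => merge_htr h1 h2 h3 h4
  have hpath : IsInducedPathOn G k p := by
    refine path_transfer (G := G₁) (G' := G) ?_ hav.1
    rintro a b ⟨i, rfl⟩ ⟨j, rfl⟩
    exact (htr _ _ (hpw i).2 (hpu i).2 (hpw j).2 (hpu j).2).symm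
  refine ⟨hpath, ?_⟩
  intro q hq
  have hmid : ∀ j : Fin (k + 2), ∀ _h1 : 1 ≤ j.val, ∀ _h2 : j.val ≤ k, q j = p ⟨j.val - 1, by omega⟩ := by
    intro j h1 h2
    have := hq.2 ⟨j.val - 1, by omega⟩
    rw [show (⟨j.val - 1, by omega⟩ : Fin k).succ.castSucc = j from Fin.ext (by show j.val - 1 + 1 = j.val; omega)] at this
    exact this
  have hqnot : ∀ j : Fin (k + 2), q j ≠ u ∧ q j ≠ w := by
    intro j
    by_cases h1 : 1 ≤ j.val ∧ j.val ≤ k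
    · rw [hmid j h1.1 h1.2]
      exact ⟨(hpu _).2, (hpw _).2⟩
    · have hj := j.isLt
      by_cases h0 : j.val = 0
      · have hadj : G.Adj (q j) (q ⟨1, by omega⟩) := by
          rw [hq.1.2]; left; show j.val + 1 = 1; omega
        rw [hmid ⟨1, by omega⟩ (Nat.le_refl 1) hk] at hadj
        constructor
        · rintro rfl; exact absurd hadj.symm (hpu _).1
        · rintro rfl; exact absurd hadj.symm (hpw _).1
      · have hl : j.val = k + 1 := by omega
        have hadj : G.Adj (q j) (q ⟨k, by omega⟩) := by
          rw [hq.1.2]; right; show k + 1 = j.val; omega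
        rw [hmid ⟨k, by omega⟩ hk (Nat.le_refl k)] at hadj
        constructor
        · rintro rfl; exact absurd hadj.symm (hpu _).1
        · rintro rfl; exact absurd hadj.symm (hpw _).1
  have hq₁ : IsExtension G₁ p q := by
    refine ⟨path_transfer ?_ hq.1, hq.2⟩
    rintro a b ⟨i, rfl⟩ ⟨j, rfl⟩
    exact htr _ _ (hqnot i).2 (hqnot i).1 (hqnot j).2 (hqnot j).1
  obtain ⟨n, c, hc, hsub⟩ := hav.2 q hq₁
  have hn3 := hc.1
  have hcnu : ∀ i : Fin n, c i ≠ u := by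
    intro i he
    have hlt : (i.val + 1) % n < n := Nat.mod_lt _ (by omega)
    have hadj : G₁.Adj (c i) (c ⟨(i.val + 1) % n, hlt⟩) := by
      rw [hc.2.2]; left; rfl
    rw [he] at hadj
    exact merge_not_adj_stray hadj
  by_cases hwr : w ∈ Set.range c
  case neg =>
    have hcnw : ∀ i : Fin n, c i ≠ w := fun i he => hwr ⟨i, he⟩
    refine ⟨n, c, cycle_transfer ?_ hc, hsub⟩
    rintro x y ⟨i, rfl⟩ ⟨j, rfl⟩
    exact (htr _ _ (hcnw i) (hcnu i) (hcnw j) (hcnu j)).symm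
  case pos =>
  obtain ⟨i₀, hw0⟩ := hwr
  haveI : NeZero n := ⟨by omega⟩
  obtain ⟨hcr, hrange⟩ := cycle_rotate hc i₀
  set cr : Fin n → V := fun i => c (i + i₀) with hcrdef
  have hcrw : cr ⟨0, by omega⟩ = w := by
    show c (⟨0, by omega⟩ + i₀) = w
    rw [show (⟨0, by omega⟩ : Fin n) + i₀ = i₀ from by
      apply Fin.ext; rw [Fin.val_add]; simp [Nat.mod_eq_of_lt i₀.isLt]]
    exact hw0
  have hcrnu : ∀ i : Fin n, cr i ≠ u := fun i => hcnu _
  have hcrnw : ∀ i : Fin n, i.val ≠ 0 → cr i ≠ w := by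
    intro i hi he
    have : i = ⟨0, by omega⟩ := hcr.2.1 (he.trans hcrw.symm)
    exact hi (congrArg Fin.val this)
  have hsubr : Set.range q ⊆ Set.range cr := by rw [hrange]; exact hsub
  have hconsec : ∀ i j : Fin n, ((i.val + 1) % n = j.val ∨ (j.val + 1) % n = i.val) →
      G₁.Adj (cr i) (cr j) := fun i j h => (hcr.2.2 i j).2 h
  have hnoncon : ∀ i j : Fin n, ¬((i.val + 1) % n = j.val ∨ (j.val + 1) % n = i.val) →
      ¬ G₁.Adj (cr i) (cr j) := fun i j h ha => h ((hcr.2.2 i j).1 ha)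
  have hB : G.Adj w (cr ⟨1, by omega⟩) ∨ G.Adj u (cr ⟨1, by omega⟩) := by
    have h1 := hconsec ⟨0, by omega⟩ ⟨1, by omega⟩
      (Or.inl (by show (0 + 1) % n = 1; exact Nat.mod_eq_of_lt (by omega)))
    rw [hcrw] at h1
    exact (merge_w_adj (hcrnw ⟨1, by omega⟩ (by show (1:ℕ) ≠ 0; omega)) (hcrnu _) hne).1 h1
  have hA : G.Adj w (cr ⟨n - 1, by omega⟩) ∨ G.Adj u (cr ⟨n - 1, by omega⟩) := by
    have h1 := hconsec ⟨0, by omega⟩ ⟨n - 1, by omega⟩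
      (Or.inr (by show (n - 1 + 1) % n = 0; rw [Nat.sub_add_cancel (by omega), Nat.mod_self]))
    rw [hcrw] at h1
    exact (merge_w_adj (hcrnw ⟨n - 1, by omega⟩ (by show n - 1 ≠ 0; omega)) (hcrnu _) hne).1 h1
  have hmidf : ∀ j : Fin n, j.val ≠ 0 → j.val ≠ 1 → j.val ≠ n - 1 →
      ¬ G.Adj w (cr j) ∧ ¬ G.Adj u (cr j) := by
    intro j h0 h1 hl
    have hj := j.isLt
    have hnc := hnoncon ⟨0, by omega⟩ j (by
      simp only [not_or]
      constructor
      · show ¬ (0 + 1) % n = j.val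
        rw [Nat.mod_eq_of_lt (show 0 + 1 < n by omega)]
        omega
      · show ¬ (j.val + 1) % n = 0
        rw [succ_mod_eq hj]
        split <;> omega)
    rw [hcrw] at hnc
    rw [merge_w_adj (hcrnw j h0) (hcrnu j) hne] at hnc
    exact not_or.mp hnc
  have H1G : ∀ i j : Fin n, i.val ≠ 0 → j.val ≠ 0 →
      (G.Adj (cr i) (cr j) ↔ ((i.val + 1) % n = j.val ∨ (j.val + 1) % n = i.val)) := by
    intro i j hi hj
    rw [htr _ _ (hcrnw i hi) (hcrnu i) (hcrnw j hj) (hcrnu j)]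
    exact hcr.2.2 i j
  have hqcr : ∀ v ∈ Set.range q, ∃ j : Fin n, j.val ≠ 0 ∧ cr j = v := by
    intro v hv
    obtain ⟨j, hj⟩ := hsubr hv
    refine ⟨j, ?_, hj⟩
    intro h0
    rw [show j = (⟨0, by omega⟩ : Fin n) from Fin.ext h0, hcrw] at hj
    obtain ⟨i, hi⟩ := hv
    exact (hqnot i).2 (hi.trans hj.symm)
  set b := cr ⟨1, by omega⟩ with hbdef
  set a := cr ⟨n - 1, by omega⟩ with hadef
  by_cases hwab : G.Adj w a ∧ G.Adj w b
  · -- β : keep the cycle as is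
    refine ⟨n, cr, ⟨hn3, hcr.2.1, ?_⟩, hsubr⟩
    intro i j
    by_cases hi : i.val = 0 <;> by_cases hj : j.val = 0
    · have hij : i = j := Fin.ext (by omega)
      subst hij
      simp only [SimpleGraph.irrefl, false_iff]
      have h2 := succ_mod_eq (n := n) i.isLt
      rw [h2]; split <;> omega
    · have hwi : cr i = w := by
        rw [show i = (⟨0, by omega⟩ : Fin n) from Fin.ext hi]; exact hcrw
      have e : (i.val + 1) % n = 1 := by rw [hi]; exact Nat.mod_eq_of_lt (by omega)
      have h2 := succ_mod_eq (n := n) j.isLt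
      rw [hwi, e, h2]
      constructor
      · intro hadj
        by_cases hj1 : j.val = 1
        · left; omega
        · by_cases hjl : j.val = n - 1
          · right; split <;> omega
          · exact absurd hadj (hmidf j hj hj1 hjl).1
      · rintro (h | h)
        · rw [show j = (⟨1, by omega⟩ : Fin n) from Fin.ext (show j.val = 1 by omega)]
          exact hwab.2
        · have : j.val = n - 1 := by split at h <;> omega
          rw [show j = (⟨n - 1, by omega⟩ : Fin n) from Fin.ext this]
          exact hwab.1
    · have hwj : cr j = w := by
        rw [show j = (⟨0, by omega⟩ : Fin n) from Fin.ext hj]; exact hcrw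
      have e : (j.val + 1) % n = 1 := by rw [hj]; exact Nat.mod_eq_of_lt (by omega)
      have h2 := succ_mod_eq (n := n) i.isLt
      rw [hwj, G.adj_comm, e, h2]
      constructor
      · intro hadj
        by_cases hi1 : i.val = 1
        · right; omega
        · by_cases hil : i.val = n - 1
          · left; split <;> omega
          · exact absurd hadj (hmidf i hi hi1 hil).1
      · rintro (h | h)
        · have : i.val = n - 1 := by split at h <;> omega
          rw [show i = (⟨n - 1, by omega⟩ : Fin n) from Fin.ext this]
          exact hwab.1
        · rw [show i = (⟨1, by omega⟩ : Fin n) from Fin.ext (show i.val = 1 by omega)]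
          exact hwab.2
    · exact H1G i j hi hj
  · by_cases huab : G.Adj u a ∧ G.Adj u b
    · -- α : replace w by u
      obtain ⟨hcyc, hcov⟩ := cycle_update hn3 hcr.2.1 H1G u
        (fun j hj he => (hcrnu j) he.symm) huab.2 huab.1
        (fun j h0 h1 hl => (hmidf j h0 h1 hl).2)
      refine ⟨n, _, hcyc, ?_⟩
      intro v hv
      obtain ⟨j, hj0, hjv⟩ := hqcr v hv
      rw [← hjv]
      exact hcov j hj0
    · by_cases huA : G.Adj u a
      · -- γ2 : u–a, w–b, ¬u–b, ¬w–a : append u at the end of cr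
        have hwB : G.Adj w b := by
          rcases hB with h | h
          · exact h
          · exact absurd ⟨huA, h⟩ huab
        have hnwA : ¬ G.Adj w a := fun h => hwab ⟨h, hwB⟩
        have hnuB : ¬ G.Adj u b := fun h => huab ⟨huA, h⟩
        have HH1 : ∀ i j : Fin n, ¬(i.val = n - 1 ∧ j.val = 0) → ¬(i.val = 0 ∧ j.val = n - 1) →
            (G.Adj (cr i) (cr j) ↔ ((i.val + 1) % n = j.val ∨ (j.val + 1) % n = i.val)) := by
          intro i j hij1 hij2
          by_cases hi : i.val = 0 <;> by_cases hj : j.val = 0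
          · have hij : i = j := Fin.ext (by omega)
            subst hij
            simp only [SimpleGraph.irrefl, false_iff]
            have h2 := succ_mod_eq (n := n) i.isLt
            rw [h2]; split <;> omega
          · have hwi : cr i = w := by
              rw [show i = (⟨0, by omega⟩ : Fin n) from Fin.ext hi]; exact hcrw
            have e : (i.val + 1) % n = 1 := by rw [hi]; exact Nat.mod_eq_of_lt (by omega)
            have h2 := succ_mod_eq (n := n) j.isLt
            rw [hwi, e, h2]
            constructor
            · intro hadj
              by_cases hj1 : j.val = 1
              · left; omega
              · by_cases hjl : j.val = n - 1
                · exact absurd ⟨hi, hjl⟩ hij2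
                · exact absurd hadj (hmidf j hj hj1 hjl).1
            · rintro (h | h)
              · rw [show j = (⟨1, by omega⟩ : Fin n) from Fin.ext (show j.val = 1 by omega)]
                exact hwB
              · have : j.val = n - 1 := by split at h <;> omega
                exact absurd ⟨hi, this⟩ hij2
          · have hwj : cr j = w := by
              rw [show j = (⟨0, by omega⟩ : Fin n) from Fin.ext hj]; exact hcrw
            have e : (j.val + 1) % n = 1 := by rw [hj]; exact Nat.mod_eq_of_lt (by omega)
            have h2 := succ_mod_eq (n := n) i.isLt
            rw [hwj, G.adj_comm, e, h2]
            constructor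
            · intro hadj
              by_cases hi1 : i.val = 1
              · right; omega
              · by_cases hil : i.val = n - 1
                · exact absurd ⟨hil, hj⟩ hij1
                · exact absurd hadj (hmidf i hi hi1 hil).1
            · rintro (h | h)
              · have : i.val = n - 1 := by split at h <;> omega
                exact absurd ⟨this, hj⟩ hij1
              · rw [show i = (⟨1, by omega⟩ : Fin n) from Fin.ext (show i.val = 1 by omega)]
                exact hwB
          · exact H1G i j hi hj
        have Hur : u ∉ Set.range cr := by rintro ⟨i, hi⟩; exact hcrnu i hi
        have HH2 : ¬ G.Adj (cr ⟨n - 1, by omega⟩) (cr ⟨0, by omega⟩) := by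
          rw [hcrw, G.adj_comm]; exact hnwA
        have HH3 : G.Adj u (cr ⟨0, by omega⟩) := by rw [hcrw]; exact hwu.symm
        have HH5 : ∀ i : Fin n, i.val ≠ 0 → i.val ≠ n - 1 → ¬ G.Adj u (cr i) := by
          intro i h0 hl
          by_cases h1 : i.val = 1
          · rw [show i = (⟨1, by omega⟩ : Fin n) from Fin.ext h1]
            exact hnuB
          · exact (hmidf i h0 h1 hl).2
        obtain ⟨hcyc, hcov⟩ := cycle_append hn3 hcr.2.1 HH1 u Hur HH2 HH3 huA HH5
        exact ⟨n + 1, _, hcyc, fun v hv => hcov (hsubr hv)⟩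
      · -- γ1 : w–a, u–b, ¬u–a, ¬w–b : insert u between w and b
        have hwA : G.Adj w a := hA.resolve_right huA
        have hnwB : ¬ G.Adj w b := fun h => hwab ⟨hwA, h⟩
        have huB : G.Adj u b := hB.resolve_left hnwB
        have HH1 : ∀ i j : Fin n, ¬(i.val = 0 ∧ j.val = 1) → ¬(i.val = 1 ∧ j.val = 0) →
            (G.Adj (cr i) (cr j) ↔ ((i.val + 1) % n = j.val ∨ (j.val + 1) % n = i.val)) := by
          intro i j hij1 hij2
          by_cases hi : i.val = 0 <;> by_cases hj : j.val = 0
          · have hij : i = j := Fin.ext (by omega)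
            subst hij
            simp only [SimpleGraph.irrefl, false_iff]
            have h2 := succ_mod_eq (n := n) i.isLt
            rw [h2]; split <;> omega
          · have hwi : cr i = w := by
              rw [show i = (⟨0, by omega⟩ : Fin n) from Fin.ext hi]; exact hcrw
            have e : (i.val + 1) % n = 1 := by rw [hi]; exact Nat.mod_eq_of_lt (by omega)
            have h2 := succ_mod_eq (n := n) j.isLt
            rw [hwi, e, h2]
            constructor
            · intro hadj
              by_cases hj1 : j.val = 1
              · exact absurd ⟨hi, hj1⟩ hij1
              · by_cases hjl : j.val = n - 1
                · right; split <;> omega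
                · exact absurd hadj (hmidf j hj hj1 hjl).1
            · rintro (h | h)
              · exact absurd ⟨hi, h.symm⟩ hij1
              · have : j.val = n - 1 := by split at h <;> omega
                rw [show j = (⟨n - 1, by omega⟩ : Fin n) from Fin.ext this]
                exact hwA
          · have hwj : cr j = w := by
              rw [show j = (⟨0, by omega⟩ : Fin n) from Fin.ext hj]; exact hcrw
            have e : (j.val + 1) % n = 1 := by rw [hj]; exact Nat.mod_eq_of_lt (by omega)
            have h2 := succ_mod_eq (n := n) i.isLt
            rw [hwj, G.adj_comm, e, h2]
            constructor
            · intro hadj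
              by_cases hi1 : i.val = 1
              · exact absurd ⟨hi1, hj⟩ hij2
              · by_cases hil : i.val = n - 1
                · left; split <;> omega
                · exact absurd hadj (hmidf i hi hi1 hil).1
            · rintro (h | h)
              · have : i.val = n - 1 := by split at h <;> omega
                rw [show i = (⟨n - 1, by omega⟩ : Fin n) from Fin.ext this]
                exact hwA
              · exact absurd ⟨h.symm, hj⟩ hij2
          · exact H1G i j hi hj
        have Hur : u ∉ Set.range cr := by rintro ⟨i, hi⟩; exact hcrnu i hi
        have HH2' : ¬ G.Adj (cr ⟨0, by omega⟩) (cr ⟨1, by omega⟩) := by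
          rw [hcrw]; exact hnwB
        have HH3' : G.Adj u (cr ⟨0, by omega⟩) := by rw [hcrw]; exact hwu.symm
        have HH5' : ∀ i : Fin n, i.val ≠ 0 → i.val ≠ 1 → ¬ G.Adj u (cr i) := by
          intro i h0 h1
          by_cases hl : i.val = n - 1
          · rw [show i = (⟨n - 1, by omega⟩ : Fin n) from Fin.ext hl]
            exact huA
          · exact (hmidf i h0 h1 hl).2
        obtain ⟨c', hcyc, hcov⟩ := cycle_insert1 hn3 hcr.2.1 HH1 u Hur HH2' HH3' huB HH5'
        exact ⟨n + 1, c', hcyc, fun v hv => hcov (hsubr hv)⟩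

end Lift

section Ext
variable {G : SimpleGraph V} {k : ℕ} {p : Fin k → V} {q : Fin (k + 2) → V}

theorem ext_mid (hq : IsExtension G p q) :
    ∀ j : Fin (k + 2), ∀ _h1 : 1 ≤ j.val, ∀ _h2 : j.val ≤ k, q j = p ⟨j.val - 1, by omega⟩ := by
  intro j h1 h2
  have := hq.2 ⟨j.val - 1, by omega⟩
  rw [show (⟨j.val - 1, by omega⟩ : Fin k).succ.castSucc = j from
    Fin.ext (by show j.val - 1 + 1 = j.val; omega)] at this
  exact this

theorem ext_adj0 (hk : 1 ≤ k) (hq : IsExtension G p q) :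
    G.Adj (q ⟨0, by omega⟩) (p ⟨0, by omega⟩) := by
  have h := (hq.1.2 ⟨0, by omega⟩ ⟨1, by omega⟩).2 (Or.inl (by show 0 + 1 = 1; omega))
  rwa [ext_mid hq ⟨1, by omega⟩ (Nat.le_refl 1) hk] at h

theorem ext_adjl (hk : 1 ≤ k) (hq : IsExtension G p q) :
    G.Adj (q ⟨k + 1, by omega⟩) (p ⟨k - 1, by omega⟩) := by
  have h := (hq.1.2 ⟨k + 1, by omega⟩ ⟨k, by omega⟩).2 (Or.inr (by show k + 1 = k + 1; omega))
  rwa [ext_mid hq ⟨k, by omega⟩ hk (Nat.le_refl k)] at h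

theorem ext_ends (hk : 1 ≤ k) (hq : IsExtension G p q) :
    ¬ G.Adj (q ⟨0, by omega⟩) (q ⟨k + 1, by omega⟩) ∧ q ⟨0, by omega⟩ ≠ q ⟨k + 1, by omega⟩ := by
  constructor
  · intro h
    have := (hq.1.2 ⟨0, by omega⟩ ⟨k + 1, by omega⟩).1 h
    simp only at this
    omega
  · intro h
    have := hq.1.1 h
    have := congrArg Fin.val this
    simp only at this
    omega

end Ext

/-- The main induction: `o = some w` is the rooted case (region `R` is a union of
components of `G - N[w]`), `o = none` the unrooted case (`R` a union of components). -/
theorem GM [Fintype V] (N : ℕ) : ∀ (G : SimpleGraph V) (k : ℕ), 1 ≤ k →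
    ∀ (R : Set V) (o : Option V),
    gsize G * (2 * Fintype.card V + 2) + 2 * R.ncard + (if o.isSome then 1 else 0) ≤ N →
    (∀ w, o = some w → (∀ v ∈ R, v ≠ w ∧ ¬ G.Adj w v) ∧
        (∀ v ∈ R, ∀ z, G.Adj v z → z ∈ R ∨ G.Adj w z)) →
    (o = none → ∀ v ∈ R, ∀ z, G.Adj v z → z ∈ R) →
    (¬ ∃ p : Fin k → V, IsInducedPathOn G k p ∧ ∀ i, p i ∈ R) ∨
    (∃ p : Fin k → V, (∀ i, p i ∈ R) ∧ IsAvoidable G p) := by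
  induction N using Nat.strong_induction_on with
  | _ N IH =>
  intro G k hk R o hμ hcondS hcondN
  by_cases hex : ∃ p : Fin k → V, IsInducedPathOn G k p ∧ ∀ i, p i ∈ R
  case neg => exact Or.inl hex
  case pos =>
  right
  obtain ⟨P, hP, hPR⟩ := hex
  have hncard_le : ∀ S : Set V, S.ncard ≤ Fintype.card V := by
    intro S
    calc S.ncard ≤ (Set.univ : Set V).ncard := Set.ncard_le_ncard (Set.subset_univ S) (Set.toFinite _)
      _ = Fintype.card V := (Set.ncard_univ V).trans Nat.card_eq_fintype_card
  rcases o with _ | w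
  · -- unrooted case
    have hcond := hcondN rfl
    by_cases hM : ∃ M : Fin (k + 2) → V, IsInducedPathOn G (k + 2) M ∧ ∀ i, M i ∈ R
    case neg =>
      -- no induced P_{k+2} in R : P is vacuously avoidable
      refine ⟨P, hPR, hP, ?_⟩
      intro q hq
      exfalso
      apply hM
      refine ⟨q, hq.1, ?_⟩
      intro j
      by_cases h1 : 1 ≤ j.val ∧ j.val ≤ k
      · rw [ext_mid hq j h1.1 h1.2]; exact hPR _
      · have hj := j.isLt
        by_cases h0 : j.val = 0
        · rw [show j = ⟨0, by omega⟩ from Fin.ext h0]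
          exact hcond _ (hPR ⟨0, by omega⟩) _ (ext_adj0 hk hq).symm
        · rw [show j = ⟨k + 1, by omega⟩ from Fin.ext (show j.val = k + 1 by omega)]
          exact hcond _ (hPR ⟨k - 1, by omega⟩) _ (ext_adjl hk hq).symm
    case pos =>
      obtain ⟨M, hMp, hMR⟩ := hM
      have hμ' : gsize G * (2 * Fintype.card V + 2) + 2 * R.ncard ≤ N := by simpa using hμ
      set w : V := M ⟨k + 1, by omega⟩ with hwdef
      set Step : V → V → Prop := fun a b => G.Adj a b ∧ b ∈ R ∧ ¬ G.Adj w b ∧ b ≠ w with hStep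
      set C : Set V := {v | Relation.ReflTransGen Step (M ⟨0, by omega⟩) v} with hCdef
      have hM0w : ¬ G.Adj w (M ⟨0, by omega⟩) ∧ M ⟨0, by omega⟩ ≠ w := by
        constructor
        · intro h
          have := (hMp.2 ⟨k + 1, by omega⟩ ⟨0, by omega⟩).1 h
          simp only at this; omega
        · intro h
          have := congrArg Fin.val (hMp.1 h)
          simp only at this; omega
      have hCR : ∀ v ∈ C, v ∈ R ∧ ¬ G.Adj w v ∧ v ≠ w := by
        intro v hv
        induction hv with
        | refl => exact ⟨hMR _, hM0w.1, hM0w.2⟩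
        | tail _ hbc _ => exact ⟨hbc.2.1, hbc.2.2.1, hbc.2.2.2⟩
      have hwR : w ∈ R := hMR _
      have hwC : w ∉ C := fun h => (hCR w h).2.2 rfl
      have hCsub : C ⊆ R := fun v hv => (hCR v hv).1
      have hlt : C.ncard < R.ncard :=
        Set.ncard_lt_ncard ⟨hCsub, fun hsub => hwC (hsub hwR)⟩ (Set.toFinite R)
      have hsome : ∀ w', some w = some w' → (∀ v ∈ C, v ≠ w' ∧ ¬ G.Adj w' v) ∧
          (∀ v ∈ C, ∀ z, G.Adj v z → z ∈ C ∨ G.Adj w' z) := by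
        intro w' heq
        cases heq
        constructor
        · exact fun v hv => ⟨(hCR v hv).2.2, (hCR v hv).2.1⟩
        · intro v hv z hadj
          by_cases hz : G.Adj w z
          · exact Or.inr hz
          · have hzR : z ∈ R := hcond v (hCsub hv) z hadj
            have hzw : z ≠ w := by
              rintro rfl
              exact (hCR v hv).2.1 hadj.symm
            exact Or.inl (Relation.ReflTransGen.tail hv ⟨hadj, hzR, hz, hzw⟩)
      have hrec := IH (gsize G * (2 * Fintype.card V + 2) + 2 * C.ncard + 1)
        (by omega) G k hk C (some w) (by simp) hsome (by intro h; simp at h)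
      have hchain : ∀ t : ℕ, ∀ _ht : t ≤ k - 1, M ⟨t, by omega⟩ ∈ C := by
        intro t
        induction t with
        | zero => intro _; exact Relation.ReflTransGen.refl
        | succ t iht =>
          intro ht
          refine Relation.ReflTransGen.tail (iht (by omega)) ?_
          refine ⟨(hMp.2 ⟨t, by omega⟩ ⟨t + 1, by omega⟩).2 (Or.inl rfl), hMR _, ?_, ?_⟩
          · intro h
            have := (hMp.2 ⟨k + 1, by omega⟩ ⟨t + 1, by omega⟩).1 h
            simp only at this; omega
          · intro h
            have := congrArg Fin.val (hMp.1 h)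
            simp only at this; omega
      rcases hrec with hno | ⟨P', hP'C, hP'av⟩
      · exfalso
        apply hno
        refine ⟨fun i : Fin k => M ⟨0 + i.val, by omega⟩, path_seg hMp 0 (by omega), ?_⟩
        intro i
        show M ⟨0 + i.val, by omega⟩ ∈ C
        rw [show (⟨0 + i.val, by omega⟩ : Fin (k + 2)) = ⟨i.val, by omega⟩ from
          Fin.ext (by show 0 + i.val = i.val; omega)]
        exact hchain i.val (by omega)
      · exact ⟨P', fun i => hCsub (hP'C i), hP'av⟩
  · -- rooted case
    have hcond := hcondS w rfl
    by_cases hu : ∃ u, G.Adj w u ∧ ∃ v ∈ R, G.Adj u v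
    case neg =>
      -- w has no neighbour with a neighbour in R : drop to the unrooted case
      refine (IH (gsize G * (2 * Fintype.card V + 2) + 2 * R.ncard) (by simp at hμ ⊢; omega)
        G k hk R none (by simp) (by simp) ?_).resolve_left (by
          intro hno; exact hno ⟨P, hP, hPR⟩)
      intro _ v hv z hadj
      rcases hcond.2 v hv z hadj with h | h
      · exact h
      · exact absurd ⟨z, h, v, hv, hadj.symm⟩ hu
    case pos =>
      obtain ⟨u, hwu, v₀, hv₀R, huv₀⟩ := hu
      have hμ' : gsize G * (2 * Fintype.card V + 2) + 2 * R.ncard + 1 ≤ N := by simpa using hμ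
      have hne : w ≠ u := hwu.ne
      have huR : u ∉ R := fun h => (hcond.1 u h).2 hwu
      have hwnR : w ∉ R := fun h => (hcond.1 w h).1 rfl
      set G₁ := mergeGraph G w u with hG₁
      set R₁ : Set V := {v ∈ R | ¬ G.Adj u v} with hR₁
      have hc1 : ∀ v ∈ R₁, v ≠ w ∧ ¬ G₁.Adj w v := by
        intro v hv
        refine ⟨(hcond.1 v hv.1).1, ?_⟩
        rw [merge_w_adj (hcond.1 v hv.1).1 (fun h => huR (by rw [← h]; exact hv.1)) hne, not_or]
        exact ⟨(hcond.1 v hv.1).2, hv.2⟩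
      have hc2 : ∀ v ∈ R₁, ∀ z, G₁.Adj v z → z ∈ R₁ ∨ G₁.Adj w z := by
        intro v hv z hadj
        have hvw : v ≠ w := (hcond.1 v hv.1).1
        have hvu : v ≠ u := fun h => huR (h ▸ hv.1)
        have hzw : z ≠ w := by
          rintro rfl
          rcases hadj with ⟨h1, h2, h3, h4 | ⟨h5, h6⟩ | ⟨h7, h8⟩⟩
          · exact (hcond.1 v hv.1).2 h4.symm
          · exact hvw h5
          · exact hv.2 h8.symm
        rw [merge_adj_of_ne hvw hzw] at hadj
        rcases hcond.2 v hv.1 z hadj.1 with hzR | hzw2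
        · by_cases huz : G.Adj u z
          · exact Or.inr ((merge_w_adj hzw hadj.2.2 hne).2 (Or.inr huz))
          · exact Or.inl ⟨hzR, huz⟩
        · exact Or.inr ((merge_w_adj hzw hadj.2.2 hne).2 (Or.inl hzw2))
      have hsz₁ : gsize G₁ < gsize G := gsize_merge_lt hwu
      have hmul₁ : gsize G₁ * (2 * Fintype.card V + 2) + (2 * Fintype.card V + 2) ≤
          gsize G * (2 * Fintype.card V + 2) := by
        calc gsize G₁ * (2 * Fintype.card V + 2) + (2 * Fintype.card V + 2)
            = (gsize G₁ + 1) * (2 * Fintype.card V + 2) := by ring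
          _ ≤ gsize G * (2 * Fintype.card V + 2) :=
              Nat.mul_le_mul_right _ (Nat.succ_le_of_lt hsz₁)
      have hrec₁ := IH (gsize G₁ * (2 * Fintype.card V + 2) + 2 * R₁.ncard + 1)
        (by have h1 := hncard_le R₁; have h2 := hncard_le R; omega)
        G₁ k hk R₁ (some w) (by simp)
        (fun w' heq => by cases heq; exact ⟨hc1, hc2⟩) (by intro h; simp at h)
      rcases hrec₁ with hno₁ | ⟨P', hP'R₁, hP'av⟩
      · -- stuck case : every induced P_k in R meets N(u); delete u instead
        have hstuck : ∀ Q : Fin k → V, IsInducedPathOn G k Q → (∀ i, Q i ∈ R) →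
            ∃ i, G.Adj u (Q i) := by
          intro Q hQ hQR
          by_contra hcon
          push_neg at hcon
          apply hno₁
          refine ⟨Q, ?_, fun i => ⟨hQR i, hcon i⟩⟩
          refine path_transfer ?_ hQ
          rintro a b ⟨i, rfl⟩ ⟨j, rfl⟩
          exact merge_htr (hcond.1 _ (hQR i)).1 (fun h => huR (h ▸ hQR i))
            (hcond.1 _ (hQR j)).1 (fun h => huR (h ▸ hQR j))
        set G₂ := delVert G u with hG₂
        have hc1' : ∀ v ∈ R, v ≠ w ∧ ¬ G₂.Adj w v :=
          fun v hv => ⟨(hcond.1 v hv).1, fun h => (hcond.1 v hv).2 h.1⟩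
        have hc2' : ∀ v ∈ R, ∀ z, G₂.Adj v z → z ∈ R ∨ G₂.Adj w z := by
          intro v hv z hadj
          rcases hcond.2 v hv z hadj.1 with h | h
          · exact Or.inl h
          · exact Or.inr ⟨h, hne, hadj.2.2⟩
        have hsz₂ : gsize G₂ < gsize G := gsize_delVert_lt ⟨w, hwu.symm⟩
        have hmul₂ : gsize G₂ * (2 * Fintype.card V + 2) + (2 * Fintype.card V + 2) ≤
            gsize G * (2 * Fintype.card V + 2) := by
          calc gsize G₂ * (2 * Fintype.card V + 2) + (2 * Fintype.card V + 2)
              = (gsize G₂ + 1) * (2 * Fintype.card V + 2) := by ring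
            _ ≤ gsize G * (2 * Fintype.card V + 2) :=
                Nat.mul_le_mul_right _ (Nat.succ_le_of_lt hsz₂)
        have htr₂ : ∀ (S : Set V), (∀ x ∈ S, x ≠ u) → ∀ a b, a ∈ S → b ∈ S →
            (G₂.Adj a b ↔ G.Adj a b) := by
          intro S hS a b ha hb
          exact ⟨fun h => h.1, fun h => ⟨h, hS a ha, hS b hb⟩⟩
        have hrec₂ := IH (gsize G₂ * (2 * Fintype.card V + 2) + 2 * R.ncard + 1)
          (by have h2 := hncard_le R; omega)
          G₂ k hk R (some w) (by simp)
          (fun w' heq => by cases heq; exact ⟨hc1', hc2'⟩) (by intro h; simp at h)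
        rcases hrec₂ with hno₂ | ⟨P', hP'R, hP'av⟩
        · exfalso
          apply hno₂
          refine ⟨P, path_transfer ?_ hP, hPR⟩
          rintro a b ⟨i, rfl⟩ ⟨j, rfl⟩
          exact ⟨fun h => ⟨h, fun hh => huR (hh ▸ hPR i), fun hh => huR (hh ▸ hPR j)⟩,
            fun h => h.1⟩
        · -- lift avoidability from G₂ = G - u to G
          have hP'nu : ∀ i, P' i ≠ u := fun i h => huR (h ▸ hP'R i)
          have hpath₂ : IsInducedPathOn G k P' := by
            refine path_transfer ?_ hP'av.1
            rintro a b ⟨i, rfl⟩ ⟨j, rfl⟩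
            exact ⟨fun h => h.1, fun h => ⟨h, hP'nu i, hP'nu j⟩⟩
          refine ⟨P', hP'R, hpath₂, ?_⟩
          intro q hq
          have hqm : ∀ j : Fin (k + 2), ∀ _h1 : 1 ≤ j.val, ∀ _h2 : j.val ≤ k, q j ∈ R := by
            intro j h1 h2
            rw [ext_mid hq j h1 h2]; exact hP'R _
          have key : ∀ q' : Fin (k + 2) → V, IsInducedPathOn G (k + 2) q' →
              (∀ j : Fin (k + 2), ∀ _h1 : 1 ≤ j.val, ∀ _h2 : j.val ≤ k, q' j ∈ R) →
              q' ⟨0, by omega⟩ = u → InInducedCycle G q' := by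
            intro q' hq' hq'R hq'0
            have hyadj : G.Adj (q' ⟨k + 1, by omega⟩) (q' ⟨k, by omega⟩) :=
              (hq'.2 ⟨k + 1, by omega⟩ ⟨k, by omega⟩).2 (Or.inr rfl)
            have hykR : q' ⟨k, by omega⟩ ∈ R := hq'R ⟨k, by omega⟩ hk (Nat.le_refl k)
            rcases hcond.2 _ hykR _ hyadj.symm with hyR | hyw
            · -- second endpoint also in R : contradicts hstuck
              exfalso
              have hQR : ∀ i : Fin k, q' ⟨2 + i.val, by omega⟩ ∈ R := by
                intro i
                by_cases hik : 2 + i.val ≤ k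
                · exact hq'R _ (by show 1 ≤ 2 + i.val; omega) hik
                · rw [show (⟨2 + i.val, by omega⟩ : Fin (k + 2)) = ⟨k + 1, by omega⟩ from
                    Fin.ext (by show 2 + i.val = k + 1; omega)]
                  exact hyR
              obtain ⟨i, hi⟩ := hstuck _ (path_seg hq' 2 (by omega)) hQR
              have hi' : G.Adj (q' ⟨0, by omega⟩) (q' ⟨2 + i.val, by omega⟩) := by
                rw [hq'0]; exact hi
              have := (hq'.2 ⟨0, by omega⟩ ⟨2 + i.val, by omega⟩).1 hi'
              simp only at this; omega
            · -- apex cycle through w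
              have happ := cycle_of_apex (m := k + 2) (by omega) hq' w ?_ ?_ ?_ ?_
              · exact ⟨k + 2 + 1, _, happ.1, happ.2⟩
              · rw [hq'0]; exact hwu
              · rw [show (⟨k + 2 - 1, by omega⟩ : Fin (k + 2)) = ⟨k + 1, by omega⟩ from
                  Fin.ext (by show k + 2 - 1 = k + 1; omega)]
                exact hyw
              · intro i h0 hl
                have := hq'R i (by omega) (by have := i.isLt; omega)
                exact (hcond.1 _ this).2
              · rintro ⟨i, hi⟩
                by_cases h1 : 1 ≤ i.val ∧ i.val ≤ k
                · exact hwnR (hi ▸ hq'R i h1.1 h1.2)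
                · have hilt := i.isLt
                  by_cases h0 : i.val = 0
                  · rw [show i = ⟨0, by omega⟩ from Fin.ext h0, hq'0] at hi
                    exact hne hi.symm
                  · rw [show i = ⟨k + 1, by omega⟩ from Fin.ext (show i.val = k + 1 by omega)] at hi
                    rw [hi] at hyw
                    exact G.irrefl hyw
          by_cases hxu : q ⟨0, by omega⟩ = u
          · exact key q hq.1 hqm hxu
          · by_cases hyu : q ⟨k + 1, by omega⟩ = u
            · have hrev := key (fun i => q i.rev) (path_rev hq.1) ?_ ?_
              · obtain ⟨n, c, hc, hsub⟩ := hrev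
                refine ⟨n, c, hc, ?_⟩
                rintro v ⟨j, rfl⟩
                refine hsub ⟨j.rev, ?_⟩
                show q j.rev.rev = q j
                rw [Fin.rev_rev]
              · intro j h1 h2
                refine hqm j.rev ?_ ?_ <;> rw [Fin.val_rev] <;> omega
              · show q (⟨0, by omega⟩ : Fin (k + 2)).rev = u
                rw [show (⟨0, by omega⟩ : Fin (k + 2)).rev = ⟨k + 1, by omega⟩ from
                  Fin.ext (show k + 2 - (0 + 1) = k + 1 by omega)]
                exact hyu
            · -- extension avoids u : stay in G₂
              have hqmem : ∀ j : Fin (k + 2), q j ≠ u := by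
                intro j
                by_cases h1 : 1 ≤ j.val ∧ j.val ≤ k
                · exact fun h => huR (h ▸ hqm j h1.1 h1.2)
                · have hjlt := j.isLt
                  by_cases h0 : j.val = 0
                  · rw [show j = ⟨0, by omega⟩ from Fin.ext h0]; exact hxu
                  · rw [show j = ⟨k + 1, by omega⟩ from Fin.ext (show j.val = k + 1 by omega)]; exact hyu
              have hq₂ : IsExtension G₂ P' q := by
                refine ⟨path_transfer ?_ hq.1, hq.2⟩
                rintro a b ⟨i, rfl⟩ ⟨j, rfl⟩
                exact ⟨fun h => ⟨h, hqmem i, hqmem j⟩, fun h => h.1⟩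
              obtain ⟨n, c, hc, hsub⟩ := hP'av.2 q hq₂
              have hcnu : ∀ i : Fin n, c i ≠ u := by
                intro i
                have hlt : (i.val + 1) % n < n := Nat.mod_lt _ (by have := hc.1; omega)
                have hadj : G₂.Adj (c i) (c ⟨(i.val + 1) % n, hlt⟩) :=
                  (hc.2.2 _ _).2 (Or.inl rfl)
                exact hadj.2.1
              refine ⟨n, c, cycle_transfer ?_ hc, hsub⟩
              rintro a b ⟨i, rfl⟩ ⟨j, rfl⟩
              exact ⟨fun h => h.1, fun h => ⟨h, hcnu i, hcnu j⟩⟩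
      · -- merge recursion succeeded : lift through the merge
        refine ⟨P', fun i => (hP'R₁ i).1, ?_⟩
        refine merge_lift hwu hk ?_ ?_ hP'av
        · exact fun i => ⟨fun h => (hP'R₁ i).2 h.symm, fun h => huR (h ▸ (hP'R₁ i).1)⟩
        · exact fun i => ⟨fun h => (hcond.1 _ (hP'R₁ i).1).2 h.symm, (hcond.1 _ (hP'R₁ i).1).1⟩


noncomputable def mergeSeq (G : SimpleGraph V) {k : ℕ} (q : Fin k → V) (hk : 1 ≤ k) :
    ℕ → SimpleGraph V
  | 0 => G
  | (i + 1) => mergeGraph (mergeSeq G q hk i) (q ⟨0, by omega⟩)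
      (q ⟨min (i + 1) (k - 1), by omega⟩)

theorem mergeSeq_spec (G : SimpleGraph V) {k : ℕ} (q : Fin k → V) (hk : 1 ≤ k)
    (hq : IsInducedPathOn G k q) :
    ∀ i : ℕ, ∀ _hi : i ≤ k - 1,
      (∀ a b : V, (∀ j : Fin k, j.val ≤ i → a ≠ q j) → (∀ j : Fin k, j.val ≤ i → b ≠ q j) →
        ((mergeSeq G q hk i).Adj a b ↔ G.Adj a b)) ∧
      (∀ b : V, (∀ j : Fin k, j.val ≤ i → b ≠ q j) →
        ((mergeSeq G q hk i).Adj (q ⟨0, by omega⟩) b ↔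
          ∃ j : Fin k, j.val ≤ i ∧ G.Adj (q j) b)) ∧
      (∀ j : Fin k, 1 ≤ j.val → j.val ≤ i → ∀ b, ¬ (mergeSeq G q hk i).Adj (q j) b) ∧
      (∀ P' : Fin k → V, (∀ t, ∀ j : Fin k, ¬ G.Adj (P' t) (q j) ∧ P' t ≠ q j) →
        IsAvoidable (mergeSeq G q hk i) P' → IsAvoidable G P') := by
  intro i
  induction i with
  | zero =>
    intro _
    refine ⟨fun a b _ _ => Iff.rfl, ?_, ?_, fun P' _ h => h⟩
    · intro b hb
      constructor
      · intro h; exact ⟨⟨0, by omega⟩, Nat.le_refl 0, h⟩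
      · rintro ⟨j, hj, h⟩
        rwa [show j = ⟨0, by omega⟩ from Fin.ext (show j.val = 0 by omega)] at h
    · intro j h1 h0 b
      omega
  | succ i ih =>
    intro hi
    obtain ⟨I1, I2, I3, L⟩ := ih (by omega)
    have hstep : (mergeSeq G q hk (i + 1)) =
        mergeGraph (mergeSeq G q hk i) (q ⟨0, by omega⟩) (q ⟨i + 1, by omega⟩) := by
      show mergeGraph _ _ (q ⟨min (i + 1) (k - 1), by omega⟩) = _
      rw [show (⟨min (i + 1) (k - 1), by omega⟩ : Fin k) = ⟨i + 1, by omega⟩ from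
        Fin.ext (by show min (i + 1) (k - 1) = i + 1; omega)]
    have hne0 : (q ⟨0, by omega⟩ : V) ≠ q ⟨i + 1, by omega⟩ := by
      intro h
      have := congrArg Fin.val (hq.1 h)
      simp only at this; omega
    have hqinj : ∀ (j j' : Fin k), j.val ≠ j'.val → q j ≠ q j' := by
      intro j j' hjj h
      exact hjj (congrArg Fin.val (hq.1 h))
    have hadj_step : (mergeSeq G q hk i).Adj (q ⟨0, by omega⟩) (q ⟨i + 1, by omega⟩) := by
      rw [I2 _ (fun j hj => hqinj ⟨i + 1, by omega⟩ j (by show i + 1 ≠ j.val; omega))]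
      exact ⟨⟨i, by omega⟩, Nat.le_refl i, (hq.2 _ _).2 (Or.inl rfl)⟩
    refine ⟨?_, ?_, ?_, ?_⟩
    · -- I1
      intro a b ha hb
      rw [hstep, merge_adj_of_ne (ha ⟨0, by omega⟩ (by show (0:ℕ) ≤ i + 1; omega))
        (hb ⟨0, by omega⟩ (by show (0:ℕ) ≤ i + 1; omega))]
      constructor
      · rintro ⟨h, _, _⟩
        exact (I1 a b (fun j hj => ha j (by omega)) (fun j hj => hb j (by omega))).1 h
      · intro h
        exact ⟨(I1 a b (fun j hj => ha j (by omega)) (fun j hj => hb j (by omega))).2 h,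
          ha ⟨i + 1, by omega⟩ (by show i + 1 ≤ i + 1; omega),
          hb ⟨i + 1, by omega⟩ (by show i + 1 ≤ i + 1; omega)⟩
    · -- I2
      intro b hb
      rw [hstep, merge_w_adj (hb ⟨0, by omega⟩ (by show (0:ℕ) ≤ i + 1; omega))
        (hb ⟨i + 1, by omega⟩ (by show i + 1 ≤ i + 1; omega)) hne0]
      rw [I2 b (fun j hj => hb j (by omega))]
      rw [I1 (q ⟨i + 1, by omega⟩) b (fun j hj => hqinj ⟨i + 1, by omega⟩ j (by show i + 1 ≠ j.val; omega))
        (fun j hj => hb j (by omega))]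
      constructor
      · rintro (⟨j, hj, h⟩ | h)
        · exact ⟨j, by omega, h⟩
        · exact ⟨⟨i + 1, by omega⟩, Nat.le_refl _, h⟩
      · rintro ⟨j, hj, h⟩
        by_cases hji : j.val ≤ i
        · exact Or.inl ⟨j, hji, h⟩
        · right
          rwa [show (⟨i + 1, by omega⟩ : Fin k) = j from Fin.ext (show i + 1 = j.val by omega)]
    · -- I3
      intro j h1 hji b
      rw [hstep]
      by_cases hj : j.val ≤ i
      · intro hadj
        rcases hadj with ⟨hh1, hh2, hh3, h4 | ⟨h5, h6⟩ | ⟨h7, h8⟩⟩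
        · exact I3 j h1 hj b h4
        · exact hqinj j ⟨0, by omega⟩ (by show j.val ≠ 0; omega) h5
        · exact I3 j h1 hj _ h8
      · have hje : j = ⟨i + 1, by omega⟩ := Fin.ext (show j.val = i + 1 by omega)
        rw [hje]
        exact fun hadj => merge_not_adj_stray hadj
    · -- L : lifting
      intro P' hP' hav
      rw [hstep] at hav
      refine L P' hP' ?_
      refine merge_lift hadj_step hk ?_ ?_ hav
      · intro t
        constructor
        · intro h
          rw [I1 (P' t) (q ⟨i + 1, by omega⟩) (fun j hj => (hP' t j).2)
            (fun j hj => hqinj ⟨i + 1, by omega⟩ j (by show i + 1 ≠ j.val; omega))] at h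
          exact (hP' t _).1 h
        · exact (hP' t _).2
      · intro t
        constructor
        · intro h
          have h' := h.symm
          rw [I2 (P' t) (fun j hj => (hP' t j).2)] at h'
          obtain ⟨j, hj, hadj⟩ := h'
          exact (hP' t j).1 hadj.symm
        · exact (hP' t _).2

theorem nbhd_avoidable [Fintype V] (G : SimpleGraph V) {k : ℕ} (hk : 1 ≤ k) (q : Fin k → V)
    (hq : IsInducedPathOn G k q) (P : Fin k → V) (hP : IsInducedPathOn G k P)
    (hPq : ∀ t j, ¬ G.Adj (P t) (q j) ∧ P t ≠ q j) :
    ∃ P' : Fin k → V, IsAvoidable G P' ∧ ∀ t j, ¬ G.Adj (P' t) (q j) ∧ P' t ≠ q j := by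
  set H := mergeSeq G q hk (k - 1) with hH
  set R : Set V := {v | ∀ j : Fin k, ¬ G.Adj v (q j) ∧ v ≠ q j} with hR
  obtain ⟨I1, I2, I3, L⟩ := mergeSeq_spec G q hk hq (k - 1) (Nat.le_refl _)
  have hallj : ∀ (v : V), v ∈ R → ∀ j : Fin k, j.val ≤ k - 1 → v ≠ q j :=
    fun v hv j _ => (hv j).2
  have hc1 : ∀ v ∈ R, v ≠ q ⟨0, by omega⟩ ∧ ¬ H.Adj (q ⟨0, by omega⟩) v := by
    intro v hv
    refine ⟨(hv ⟨0, by omega⟩).2, ?_⟩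
    rw [I2 v (hallj v hv)]
    rintro ⟨j, hj, hadj⟩
    exact (hv j).1 hadj.symm
  have hc2 : ∀ v ∈ R, ∀ z, H.Adj v z → z ∈ R ∨ H.Adj (q ⟨0, by omega⟩) z := by
    intro v hv z hadj
    by_cases hzq : ∃ j : Fin k, z = q j
    · exfalso
      obtain ⟨j, rfl⟩ := hzq
      by_cases hj0 : j.val = 0
      · rw [show j = ⟨0, by omega⟩ from Fin.ext hj0] at hadj
        exact hc1 v hv |>.2 hadj.symm
      · exact I3 j (by omega) (by have := j.isLt; omega) v hadj.symm
    · push_neg at hzq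
      have hGadj : G.Adj v z :=
        (I1 v z (hallj v hv) (fun j _ => hzq j)).1 hadj
      by_cases hzR : z ∈ R
      · exact Or.inl hzR
      · right
        rw [I2 z (fun j _ => hzq j)]
        simp only [hR, Set.mem_setOf_eq, not_forall] at hzR
        obtain ⟨j, hj⟩ := hzR
        rw [not_and_or] at hj
        rcases hj with hj | hj
        · rw [not_not] at hj
          exact ⟨j, by have := j.isLt; omega, hj.symm⟩
        · exact absurd (hzq j) hj
  have hPH : IsInducedPathOn H k P := by
    refine path_transfer ?_ hP
    rintro a b ⟨i, rfl⟩ ⟨j, rfl⟩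
    exact (I1 (P i) (P j) (fun t _ => (hPq i t).2) (fun t _ => (hPq j t).2)).symm
  have hGM := GM (gsize H * (2 * Fintype.card V + 2) + 2 * R.ncard + 1) H k hk R
    (some (q ⟨0, by omega⟩)) (by simp)
    (fun w' heq => by cases heq; exact ⟨hc1, hc2⟩) (by intro h; simp at h)
  rcases hGM with hno | ⟨P', hP'R, hP'av⟩
  · exfalso
    exact hno ⟨P, hPH, fun i => fun j => hPq i j⟩
  · refine ⟨P', L P' (fun t j => ⟨(hP'R t j).1, (hP'R t j).2⟩) hP'av,
      fun t j => hP'R t j⟩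

/-- If a finite graph contains two vertex-disjoint, non-adjacent induced `P_k`, then it
contains two vertex-disjoint, non-adjacent induced `P_k` both avoidable in `G`. -/
theorem stmt9 [Fintype V] (k : ℕ) (hk : 1 ≤ k) (G : SimpleGraph V)
    (h : ∃ p q : Fin k → V, IsInducedPathOn G k p ∧ IsInducedPathOn G k q ∧
      ∀ i j, p i ≠ q j ∧ ¬ G.Adj (p i) (q j)) :
    ∃ p q : Fin k → V, IsAvoidable G p ∧ IsAvoidable G q ∧
      ∀ i j, p i ≠ q j ∧ ¬ G.Adj (p i) (q j) := by
  obtain ⟨p, q, hp, hq0, hpq⟩ := h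
  obtain ⟨p₁, hp₁av, hp₁q⟩ := nbhd_avoidable G hk q hq0 p hp
    (fun t j => ⟨(hpq t j).2, (hpq t j).1⟩)
  obtain ⟨q₁, hq₁av, hq₁p⟩ := nbhd_avoidable G hk p₁ hp₁av.1 q hq0
    (fun t j => ⟨fun hadj => (hp₁q j t).1 hadj.symm, fun he => (hp₁q j t).2 he.symm⟩)
  exact ⟨p₁, q₁, hp₁av, hq₁av, fun i j =>
    ⟨fun he => (hq₁p j i).2 he.symm, fun hadj => (hq₁p j i).1 hadj.symm⟩⟩
end

section
/- Let k be a positive integer and G a finite graph, and suppose for every vertex u of G either G − N[u] has no induced P_k or there is an induced P_k in G − N[u] avoidable in G; suppose moreover G contains an induced P_k but no avoidable induced P_k. Then every induced path on k vertices in G dominates V(G). -/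
variable {V : Type*}

/-- If `H_R(G,k,u)` holds for every vertex `u`, and `G` contains an induced `P_k` but no
avoidable induced `P_k`, then every induced `P_k` of `G` dominates `V(G)`. -/
theorem stmt11 [Fintype V] (k : ℕ) (hk : 1 ≤ k) (G : SimpleGraph V)
    (hHR : ∀ u : V,
      (¬ ∃ p : Fin k → V, IsInducedPathOn G k p ∧ ∀ i, OutsideClosedNbhd G u (p i)) ∨
      (∃ p : Fin k → V, IsInducedPathOn G k p ∧ (∀ i, OutsideClosedNbhd G u (p i)) ∧
        IsAvoidable G p))
    (hPk : ∃ p : Fin k → V, IsInducedPathOn G k p)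
    (hNoAvoid : ¬ ∃ p : Fin k → V, IsAvoidable G p) :
    ∀ p : Fin k → V, IsInducedPathOn G k p →
      ∀ v : V, (∃ i, p i = v) ∨ (∃ i, G.Adj (p i) v) := by
  intro p hp v
  by_contra hcon
  push_neg at hcon
  obtain ⟨h1, h2⟩ := hcon
  rcases hHR v with hA | ⟨p', hp', _, hav⟩
  · exact hA ⟨p, hp, fun i => ⟨h1 i, fun h => h2 i h.symm⟩⟩
  · exact hNoAvoid ⟨p', hav⟩
end

section
/- Let G be a graph, u₁u₂ an edge of G, and G' the graph obtained by merging u₁ and u₂ into a vertex u. If C is an induced cycle of G' passing through u, then there is an induced cycle of G containing all vertices of C except u (replacing u by u₁, by u₂, or by the edge u₁u₂). -/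
variable {V : Type*}

private lemma modsucc {n j : ℕ} (hj : j < n) :
    (j + 1) % n = if j + 1 = n then 0 else j + 1 := by
  split
  · next hs => simp [hs]
  · next hs => exact Nat.mod_eq_of_lt (by omega)

private lemma fin_val_add_one {n : ℕ} [NeZero n] (i : Fin n) :
    ((i + 1 : Fin n)).val = (i.val + 1) % n := by
  rw [Fin.add_def, Fin.val_one']
  conv_rhs => rw [Nat.add_mod, Nat.mod_eq_of_lt i.isLt]

private lemma fin_succ_mod {n : ℕ} [NeZero n] (i j : Fin n) :
    (i.val + 1) % n = j.val ↔ i + 1 = j := by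
  constructor
  · intro hh; apply Fin.ext; rw [fin_val_add_one]; exact hh
  · intro hh; rw [← fin_val_add_one]; exact congrArg Fin.val hh

private lemma rotate {G : SimpleGraph V} {n : ℕ} {c : Fin n → V}
    (hc : IsInducedCycleOn G n c) (k : Fin n) :
    IsInducedCycleOn G n (fun i => c (k + i)) := by
  obtain ⟨hn, hinj, hadj⟩ := hc
  haveI : NeZero n := ⟨by omega⟩
  refine ⟨hn, fun i j hij => add_left_cancel (hinj hij), fun i j => ?_⟩
  rw [hadj, fin_succ_mod, fin_succ_mod, fin_succ_mod, fin_succ_mod,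
    add_assoc, add_assoc, add_right_inj, add_right_inj]

private lemma fin_ne_zero_iff {n : ℕ} [NeZero n] {j : Fin n} : j ≠ 0 ↔ j.val ≠ 0 := by
  rw [ne_eq, Fin.ext_iff, Fin.val_zero]

private lemma helperA (G : SimpleGraph V) {n : ℕ} [NeZero n] (hn : 3 ≤ n) (c : Fin n → V) (x : V)
    (hinj : ∀ i j : Fin n, c i = c j → i = j)
    (hx : ∀ j : Fin n, j ≠ 0 → x ≠ c j)
    (F1 : ∀ i j : Fin n, i ≠ 0 → j ≠ 0 →
      (G.Adj (c i) (c j) ↔ ((i.val + 1) % n = j.val ∨ (j.val + 1) % n = i.val)))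
    (ha : G.Adj x (c ⟨1, by omega⟩))
    (hb : G.Adj x (c ⟨n - 1, by omega⟩))
    (hno : ∀ j : Fin n, j ≠ 0 → j.val ≠ 1 → j.val ≠ n - 1 → ¬ G.Adj x (c j)) :
    ∃ (m : ℕ) (d : Fin m → V), IsInducedCycleOn G m d ∧
      ∀ j : Fin n, j ≠ 0 → c j ∈ Set.range d := by
  set d : Fin n → V := fun j => if j = 0 then x else c j with hd
  have hdval : ∀ j : Fin n, j ≠ 0 → d j = c j := fun j hj => by simp [hd, hj]
  have hd0 : d 0 = x := by simp [hd]
  refine ⟨n, d, ⟨hn, ?_, ?_⟩, fun j hj => ⟨j, hdval j hj⟩⟩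
  · intro i j hij
    by_cases hi : i = 0 <;> by_cases hj : j = 0
    · rw [hi, hj]
    · rw [hi, hd0, hdval j hj] at hij
      exact absurd hij (hx j hj)
    · rw [hj, hd0, hdval i hi] at hij
      exact absurd hij.symm (hx i hi)
    · rw [hdval i hi, hdval j hj] at hij
      exact hinj _ _ hij
  · intro i j
    have h1n : 1 % n = 1 := Nat.mod_eq_of_lt (by omega)
    by_cases hi : i = 0 <;> by_cases hj : j = 0
    · subst hi; subst hj
      refine iff_of_false (fun hadj => G.irrefl hadj) ?_
      simp only [Fin.val_zero, zero_add, h1n]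
      omega
    · subst hi
      rw [hd0, hdval j hj]
      have hjv : j.val ≠ 0 := fin_ne_zero_iff.mp hj
      have hjlt := j.isLt
      have e2 : (j.val + 1) % n = 0 ↔ j.val = n - 1 := by
        rw [modsucc hjlt]; split <;> omega
      simp only [Fin.val_zero, zero_add, h1n]
      constructor
      · intro hadj
        by_cases h1 : j.val = 1
        · exact Or.inl h1.symm
        by_cases h2 : j.val = n - 1
        · exact Or.inr (e2.mpr h2)
        · exact absurd hadj (hno j hj h1 h2)
      · rintro (hh | hh)
        · have : j = ⟨1, by omega⟩ := Fin.ext hh.symm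
          rw [this]; exact ha
        · have : j = ⟨n - 1, by omega⟩ := Fin.ext (e2.mp hh)
          rw [this]; exact hb
    · subst hj
      rw [hd0, hdval i hi]
      have hiv : i.val ≠ 0 := fin_ne_zero_iff.mp hi
      have hilt := i.isLt
      have e2 : (i.val + 1) % n = 0 ↔ i.val = n - 1 := by
        rw [modsucc hilt]; split <;> omega
      simp only [Fin.val_zero, zero_add, h1n]
      rw [G.adj_comm]
      constructor
      · intro hadj
        by_cases h1 : i.val = 1
        · exact Or.inr h1.symm
        by_cases h2 : i.val = n - 1
        · exact Or.inl (e2.mpr h2)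
        · exact absurd hadj (hno i hi h1 h2)
      · rintro (hh | hh)
        · have : i = ⟨n - 1, by omega⟩ := Fin.ext (e2.mp hh)
          rw [this]; exact hb
        · have : i = ⟨1, by omega⟩ := Fin.ext hh.symm
          rw [this]; exact ha
    · rw [hdval i hi, hdval j hj]
      exact F1 i j hi hj

private lemma helperB (G : SimpleGraph V) {n : ℕ} [NeZero n] (hn : 3 ≤ n) (c : Fin n → V) (x y : V)
    (hinj : ∀ i j : Fin n, c i = c j → i = j)
    (hx : ∀ j : Fin n, j ≠ 0 → x ≠ c j)
    (hy : ∀ j : Fin n, j ≠ 0 → y ≠ c j)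
    (hxy : x ≠ y)
    (F1 : ∀ i j : Fin n, i ≠ 0 → j ≠ 0 →
      (G.Adj (c i) (c j) ↔ ((i.val + 1) % n = j.val ∨ (j.val + 1) % n = i.val)))
    (hxa : G.Adj x (c ⟨1, by omega⟩))
    (hyb : G.Adj y (c ⟨n - 1, by omega⟩))
    (hadjxy : G.Adj x y)
    (hnox : ∀ j : Fin n, j ≠ 0 → j.val ≠ 1 → ¬ G.Adj x (c j))
    (hnoy : ∀ j : Fin n, j ≠ 0 → j.val ≠ n - 1 → ¬ G.Adj y (c j)) :
    ∃ (m : ℕ) (d : Fin m → V), IsInducedCycleOn G m d ∧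
      ∀ j : Fin n, j ≠ 0 → c j ∈ Set.range d := by
  set d : Fin (n + 1) → V := fun j =>
    if j.val = 0 then x else if hj : j.val = n then y
    else c ⟨j.val, lt_of_le_of_ne (Nat.le_of_lt_succ j.isLt) hj⟩ with hd
  have hd0 : ∀ j : Fin (n + 1), j.val = 0 → d j = x := fun j hj => by
    simp only [hd]; rw [if_pos hj]
  have hdn : ∀ j : Fin (n + 1), j.val = n → d j = y := fun j hj => by
    simp only [hd]; rw [if_neg (by omega), dif_pos hj]
  have hdint : ∀ (j : Fin (n + 1)) (h0 : j.val ≠ 0) (hn' : j.val ≠ n),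
      d j = c ⟨j.val, lt_of_le_of_ne (Nat.le_of_lt_succ j.isLt) hn'⟩ := by
    intro j h0 hn'
    simp only [hd]; rw [if_neg h0, dif_neg hn']
  have hvne : ∀ (v : ℕ) (hv : v < n), v ≠ 0 → (⟨v, hv⟩ : Fin n) ≠ 0 :=
    fun v hv h0 => fin_ne_zero_iff.mpr h0
  refine ⟨n + 1, d, ⟨by omega, ?_, ?_⟩, fun j hj => ?_⟩
  · -- injectivity
    intro i j hij
    by_cases hi0 : i.val = 0 <;> by_cases hin : i.val = n <;>
      by_cases hj0 : j.val = 0 <;> by_cases hjn : j.val = n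
    all_goals try omega
    · rw [hd0 i hi0, hdn j hjn] at hij; exact absurd hij hxy
    · rw [hd0 i hi0, hdint j hj0 hjn] at hij
      exact absurd hij (hx _ (hvne _ _ hj0))
    · rw [hdn i hin, hd0 j hj0] at hij; exact absurd hij.symm hxy
    · rw [hdn i hin, hdint j hj0 hjn] at hij
      exact absurd hij (hy _ (hvne _ _ hj0))
    · rw [hdint i hi0 hin, hd0 j hj0] at hij
      exact absurd hij.symm (hx _ (hvne _ _ hi0))
    · rw [hdint i hi0 hin, hdn j hjn] at hij
      exact absurd hij.symm (hy _ (hvne _ _ hi0))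
    · rw [hdint i hi0 hin, hdint j hj0 hjn] at hij
      have := hinj _ _ hij
      exact Fin.ext (by simpa [Fin.ext_iff] using this)
  · -- adjacency
    intro i j
    have hilt := i.isLt
    have hjlt := j.isLt
    by_cases hi0 : i.val = 0 <;> by_cases hin : i.val = n <;>
      by_cases hj0 : j.val = 0 <;> by_cases hjn : j.val = n
    all_goals try omega
    · -- 0 0
      rw [hd0 i hi0, hd0 j hj0]
      refine iff_of_false (G.irrefl) ?_
      rw [hi0, hj0, Nat.mod_eq_of_lt (by omega : 0 + 1 < n + 1)]
      omega
    · -- 0 n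
      rw [hd0 i hi0, hdn j hjn]
      refine iff_of_true hadjxy ?_
      right
      rw [hjn, hi0, Nat.mod_self]
    · -- 0 int
      rw [hd0 i hi0, hdint j hj0 hjn]
      rw [hi0, Nat.mod_eq_of_lt (by omega : 0 + 1 < n + 1),
        Nat.mod_eq_of_lt (by omega : j.val + 1 < n + 1)]
      constructor
      · intro hadj
        by_cases h1 : j.val = 1
        · omega
        · exact absurd hadj (hnox _ (hvne _ _ hj0) h1)
      · intro hh
        have hj1 : j.val = 1 := by omega
        simp only [hj1]
        exact hxa
    · -- n 0
      rw [hdn i hin, hd0 j hj0]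
      refine iff_of_true hadjxy.symm ?_
      left
      rw [hin, hj0, Nat.mod_self]
    · -- n n
      rw [hdn i hin, hdn j hjn]
      exact iff_of_false (G.irrefl) (by rw [hin, hjn, Nat.mod_self]; omega)
    · -- n int
      rw [hdn i hin, hdint j hj0 hjn]
      rw [hin, Nat.mod_self, Nat.mod_eq_of_lt (by omega : j.val + 1 < n + 1)]
      constructor
      · intro hadj
        by_cases h1 : j.val = n - 1
        · omega
        · exact absurd hadj (hnoy _ (hvne _ _ hj0) h1)
      · intro hh
        have hj1 : j.val = n - 1 := by omega
        simp only [hj1]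
        exact hyb
    · -- int 0
      rw [hdint i hi0 hin, hd0 j hj0]
      rw [hj0, Nat.mod_eq_of_lt (by omega : 0 + 1 < n + 1),
        Nat.mod_eq_of_lt (by omega : i.val + 1 < n + 1)]
      rw [G.adj_comm]
      constructor
      · intro hadj
        by_cases h1 : i.val = 1
        · omega
        · exact absurd hadj (hnox _ (hvne _ _ hi0) h1)
      · intro hh
        have hi1 : i.val = 1 := by omega
        simp only [hi1]
        exact hxa
    · -- int n
      rw [hdint i hi0 hin, hdn j hjn]
      rw [hjn, Nat.mod_self, Nat.mod_eq_of_lt (by omega : i.val + 1 < n + 1)]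
      rw [G.adj_comm]
      constructor
      · intro hadj
        by_cases h1 : i.val = n - 1
        · omega
        · exact absurd hadj (hnoy _ (hvne _ _ hi0) h1)
      · intro hh
        have hi1 : i.val = n - 1 := by omega
        simp only [hi1]
        exact hyb
    · -- int int
      rw [hdint i hi0 hin, hdint j hj0 hjn]
      rw [F1 _ _ (hvne _ _ hi0) (hvne _ _ hj0)]
      simp only
      rw [modsucc (show i.val < n by omega), modsucc (show j.val < n by omega),
        Nat.mod_eq_of_lt (by omega : i.val + 1 < n + 1),
        Nat.mod_eq_of_lt (by omega : j.val + 1 < n + 1)]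
      split_ifs <;> omega
  · -- range
    have hjv : j.val ≠ 0 := fin_ne_zero_iff.mp hj
    refine ⟨⟨j.val, by omega⟩, ?_⟩
    rw [hdint _ (by simpa using hjv) (by simp; omega)]

private lemma main_lemma {G : SimpleGraph V} {u₁ u₂ : V} (h : G.Adj u₁ u₂)
    {n : ℕ} [NeZero n] {c : Fin n → V} (hc : IsInducedCycleOn (mergeGraph G u₁ u₂) n c)
    (h0 : c 0 = u₁) :
    ∃ (m : ℕ) (d : Fin m → V), IsInducedCycleOn G m d ∧
      ∀ i : Fin n, c i ≠ u₁ → c i ∈ Set.range d := by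
  obtain ⟨hn, hinj, hadj⟩ := hc
  have h12 : u₁ ≠ u₂ := h.ne
  -- every cycle vertex differs from u₂
  have cne2 : ∀ i : Fin n, c i ≠ u₂ := by
    intro i
    have hii : i ≠ i + 1 := by
      intro e
      have hlt := i.isLt
      have he := congrArg Fin.val e
      rw [fin_val_add_one, modsucc i.isLt] at he
      split at he <;> omega
    have hadji : (mergeGraph G u₁ u₂).Adj (c i) (c (i + 1)) := by
      rw [hadj]
      exact Or.inl ((fin_succ_mod i (i + 1)).mpr rfl)
    exact hadji.2.1
  -- vertices other than c 0 differ from u₁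
  have cne1 : ∀ j : Fin n, j ≠ 0 → c j ≠ u₁ := by
    intro j hj e
    exact hj (hinj (e.trans h0.symm))
  have hinj' : ∀ i j : Fin n, c i = c j → i = j := fun i j e => hinj e
  -- F1 : adjacency in G among non-zero indices matches the cycle pattern
  have F1 : ∀ i j : Fin n, i ≠ 0 → j ≠ 0 →
      (G.Adj (c i) (c j) ↔ ((i.val + 1) % n = j.val ∨ (j.val + 1) % n = i.val)) := by
    intro i j hi hj
    constructor
    · intro hadjG
      rw [← hadj]
      exact ⟨hadjG.ne, cne2 i, cne2 j, Or.inl hadjG⟩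
    · intro hh
      have hm := (hadj i j).mpr hh
      rcases hm.2.2.2 with hG | ⟨e1, _⟩ | ⟨e2, _⟩
      · exact hG
      · exact absurd e1 (cne1 i hi)
      · exact absurd e2 (cne1 j hj)
  -- F2 : G-adjacency of u₁ or u₂ to a cycle vertex forces consecutiveness with 0
  have F2 : ∀ j : Fin n, j ≠ 0 → (G.Adj u₁ (c j) ∨ G.Adj u₂ (c j)) →
      ((1 % n = j.val) ∨ ((j.val + 1) % n = 0)) := by
    intro j hj hor
    have hm : (mergeGraph G u₁ u₂).Adj (c 0) (c j) := by
      rw [h0]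
      refine ⟨(cne1 j hj).symm.symm ∘ Eq.symm, h12, cne2 j, ?_⟩
      rcases hor with h1 | h2
      · exact Or.inl h1
      · exact Or.inr (Or.inl ⟨rfl, h2⟩)
    have := (hadj 0 j).mp hm
    simpa using this
  have h1n : 1 % n = 1 := Nat.mod_eq_of_lt (by omega)
  set a : V := c ⟨1, by omega⟩ with hadef
  set b : V := c ⟨n - 1, by omega⟩ with hbdef
  have hane0 : (⟨1, by omega⟩ : Fin n) ≠ 0 := fin_ne_zero_iff.mpr (by exact (by omega : (1:ℕ) ≠ 0))
  have hbne0 : (⟨n - 1, by omega⟩ : Fin n) ≠ 0 := fin_ne_zero_iff.mpr (by exact (by omega : n - 1 ≠ 0))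
  -- u₁ or u₂ is G-adjacent to a, and to b
  have hA : G.Adj u₁ a ∨ G.Adj u₂ a := by
    have hm : (mergeGraph G u₁ u₂).Adj (c 0) (c ⟨1, by omega⟩) := by
      rw [hadj]; left; simpa using h1n
    rw [h0] at hm
    rcases hm.2.2.2 with hG | ⟨_, h2⟩ | ⟨e2, _⟩
    · exact Or.inl hG
    · exact Or.inr h2
    · exact absurd e2 (cne1 _ hane0)
  have hB : G.Adj u₁ b ∨ G.Adj u₂ b := by
    have hm : (mergeGraph G u₁ u₂).Adj (c 0) (c ⟨n - 1, by omega⟩) := by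
      rw [hadj]; right
      simp only [Fin.val_zero]
      rw [modsucc (by omega : n - 1 < n)]
      simp; omega
    rw [h0] at hm
    rcases hm.2.2.2 with hG | ⟨_, h2⟩ | ⟨e2, _⟩
    · exact Or.inl hG
    · exact Or.inr h2
    · exact absurd e2 (cne1 _ hbne0)
  -- non-adjacency from F2
  have hno1 : ∀ j : Fin n, j ≠ 0 → j.val ≠ 1 → j.val ≠ n - 1 → ¬ G.Adj u₁ (c j) := by
    intro j hj e1 e2 hadjG
    have := F2 j hj (Or.inl hadjG)
    have hjlt := j.isLt
    rw [h1n, modsucc hjlt] at this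
    split at this <;> omega
  have hno2 : ∀ j : Fin n, j ≠ 0 → j.val ≠ 1 → j.val ≠ n - 1 → ¬ G.Adj u₂ (c j) := by
    intro j hj e1 e2 hadjG
    have := F2 j hj (Or.inr hadjG)
    have hjlt := j.isLt
    rw [h1n, modsucc hjlt] at this
    split at this <;> omega
  have conc : ∀ (S : ∃ (m : ℕ) (d : Fin m → V), IsInducedCycleOn G m d ∧
      ∀ j : Fin n, j ≠ 0 → c j ∈ Set.range d),
      ∃ (m : ℕ) (d : Fin m → V), IsInducedCycleOn G m d ∧
      ∀ i : Fin n, c i ≠ u₁ → c i ∈ Set.range d := by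
    rintro ⟨m, d, hd, hr⟩
    refine ⟨m, d, hd, fun i hi => hr i ?_⟩
    intro e; rw [e, h0] at hi; exact hi rfl
  by_cases hA2 : G.Adj u₂ a <;> by_cases hB2 : G.Adj u₂ b
  · -- replace u₁ with u₂
    refine conc (helperA G hn c u₂ hinj' (fun j hj => (cne2 j).symm) F1 hA2 hB2 ?_)
    exact fun j hj e1 e2 => hno2 j hj e1 e2
  · -- A2, ¬B2 : then B1; if A1 keep u₁; else insert with x = u₂, y = u₁
    have hB1 : G.Adj u₁ b := hB.resolve_right hB2
    by_cases hA1 : G.Adj u₁ a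
    · refine conc (helperA G hn c u₁ hinj' (fun j hj => (cne1 j hj).symm) F1 hA1 hB1 ?_)
      exact fun j hj e1 e2 => hno1 j hj e1 e2
    · refine conc (helperB G hn c u₂ u₁ hinj' (fun j hj => (cne2 j).symm)
        (fun j hj => (cne1 j hj).symm) h12.symm F1 hA2 hB1 h.symm ?_ ?_)
      · intro j hj e1 hadjG
        by_cases e2 : j.val = n - 1
        · have : j = ⟨n - 1, by omega⟩ := Fin.ext e2
          rw [this] at hadjG
          exact hB2 hadjG
        · exact hno2 j hj e1 e2 hadjG
      · intro j hj e2 hadjG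
        by_cases e1 : j.val = 1
        · have : j = ⟨1, by omega⟩ := Fin.ext e1
          rw [this] at hadjG
          exact hA1 hadjG
        · exact hno1 j hj e1 e2 hadjG
  · -- ¬A2 : then A1; if B1 keep u₁; else insert with x = u₁, y = u₂
    have hA1 : G.Adj u₁ a := hA.resolve_right hA2
    by_cases hB1 : G.Adj u₁ b
    · refine conc (helperA G hn c u₁ hinj' (fun j hj => (cne1 j hj).symm) F1 hA1 hB1 ?_)
      exact fun j hj e1 e2 => hno1 j hj e1 e2
    · refine conc (helperB G hn c u₁ u₂ hinj' (fun j hj => (cne1 j hj).symm)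
        (fun j hj => (cne2 j).symm) h12 F1 hA1 hB2 h ?_ ?_)
      · intro j hj e1 hadjG
        by_cases e2 : j.val = n - 1
        · have : j = ⟨n - 1, by omega⟩ := Fin.ext e2
          rw [this] at hadjG
          exact hB1 hadjG
        · exact hno1 j hj e1 e2 hadjG
      · intro j hj e2 hadjG
        by_cases e1 : j.val = 1
        · have : j = ⟨1, by omega⟩ := Fin.ext e1
          rw [this] at hadjG
          exact hA2 hadjG
        · exact hno2 j hj e1 e2 hadjG
  · -- ¬A2, ¬B2 : A1 and B1 forced, keep u₁
    have hA1 : G.Adj u₁ a := hA.resolve_right hA2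
    have hB1 : G.Adj u₁ b := hB.resolve_right hB2
    refine conc (helperA G hn c u₁ hinj' (fun j hj => (cne1 j hj).symm) F1 hA1 hB1 ?_)
    exact fun j hj e1 e2 => hno1 j hj e1 e2


/-- If `C` is an induced cycle through the merged vertex `u` (represented by `u₁`) of
`G' = mergeGraph G u₁ u₂`, then `G` has an induced cycle containing all vertices of `C`
except `u`. -/
theorem stmt15 (G : SimpleGraph V) (u₁ u₂ : V) (h : G.Adj u₁ u₂)
    (n : ℕ) (c : Fin n → V) (hc : IsInducedCycleOn (mergeGraph G u₁ u₂) n c)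
    (hu : ∃ i, c i = u₁) :
    ∃ (m : ℕ) (d : Fin m → V), IsInducedCycleOn G m d ∧
      ∀ i : Fin n, c i ≠ u₁ → c i ∈ Set.range d := by
  obtain ⟨i₀, hi₀⟩ := hu
  have hn := hc.1
  haveI : NeZero n := ⟨by omega⟩
  have hc' : IsInducedCycleOn (mergeGraph G u₁ u₂) n (fun i => c (i₀ + i)) :=
    rotate hc i₀
  have h0 : (fun i => c (i₀ + i)) 0 = u₁ := by simpa using hi₀
  obtain ⟨m, d, hd, hr⟩ := main_lemma h hc' h0
  refine ⟨m, d, hd, fun i hi => ?_⟩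
  have key : i₀ + (i - i₀) = i := by
    rw [add_sub_cancel]
  have := hr (i - i₀) (by simpa [key] using hi)
  simpa [key] using this
end

section
/- For every positive integer k ≥ 1, if a finite graph G contains an induced path on k vertices, then G contains an induced path on k vertices that is avoidable in G; consequently, the problem of deciding whether G contains an induced path on k vertices is equivalent to deciding whether G contains an avoidable induced path on k vertices. -/
variable {V : Type*}

namespace AvoidAux

variable {V : Type*} {G G' : SimpleGraph V}

/-! ### Basic path lemmas -/

lemma ipath_adj {k : ℕ} {p : Fin k → V} (h : IsInducedPathOn G k p) {i j : Fin k}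
    (hij : i.val + 1 = j.val) : G.Adj (p i) (p j) :=
  (h.2 i j).mpr (Or.inl hij)

lemma ipath_nadj {k : ℕ} {p : Fin k → V} (h : IsInducedPathOn G k p) {i j : Fin k}
    (h1 : i.val + 1 ≠ j.val) (h2 : j.val + 1 ≠ i.val) : ¬ G.Adj (p i) (p j) := by
  intro hadj
  rcases (h.2 i j).mp hadj with h' | h' <;> omega

lemma ipath_congr {k : ℕ} {p : Fin k → V} (h : IsInducedPathOn G k p)
    (hadj : ∀ i j : Fin k, G'.Adj (p i) (p j) ↔ G.Adj (p i) (p j)) :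
    IsInducedPathOn G' k p :=
  ⟨h.1, fun i j => (hadj i j).trans (h.2 i j)⟩

lemma ipath_window {m k t : ℕ} (hkt : k + t ≤ m) {p : Fin m → V}
    (hp : IsInducedPathOn G m p) :
    IsInducedPathOn G k (fun i : Fin k => p ⟨i.val + t, by omega⟩) := by
  constructor
  · intro a b hab
    have h2 := congrArg Fin.val (hp.1 hab)
    simp only [] at h2
    exact Fin.ext (by omega)
  · intro i j
    rw [hp.2]
    constructor <;> (intro h; simp only [] at h ⊢; omega)

/-! ### Basic cycle lemmas -/

lemma icycle_of {n : ℕ} {c : Fin n → V} (h3 : 3 ≤ n) (hinj : Function.Injective c)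
    (hcons : ∀ i : Fin n, G.Adj (c i) (c ⟨(i.val + 1) % n, Nat.mod_lt _ (by omega)⟩))
    (hnon : ∀ i j : Fin n, (i.val + 1) % n ≠ j.val → (j.val + 1) % n ≠ i.val →
      ¬ G.Adj (c i) (c j)) :
    IsInducedCycleOn G n c := by
  refine ⟨h3, hinj, fun i j => ⟨?_, ?_⟩⟩
  · intro hadj
    by_contra hcon
    push_neg at hcon
    exact hnon i j hcon.1 hcon.2 hadj
  · rintro (h | h)
    · have : j = ⟨(i.val + 1) % n, Nat.mod_lt _ (by omega)⟩ := Fin.ext h.symm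
      rw [this]; exact hcons i
    · have : i = ⟨(j.val + 1) % n, Nat.mod_lt _ (by omega)⟩ := Fin.ext h.symm
      rw [this]; exact (hcons j).symm

lemma icycle_adj {n : ℕ} {c : Fin n → V} (h : IsInducedCycleOn G n c) {i j : Fin n}
    (hij : (i.val + 1) % n = j.val) : G.Adj (c i) (c j) :=
  (h.2.2 i j).mpr (Or.inl hij)

lemma icycle_nadj {n : ℕ} {c : Fin n → V} (h : IsInducedCycleOn G n c) {i j : Fin n}
    (h1 : (i.val + 1) % n ≠ j.val) (h2 : (j.val + 1) % n ≠ i.val) :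
    ¬ G.Adj (c i) (c j) := by
  intro hadj
  rcases (h.2.2 i j).mp hadj with h' | h' <;> [exact h1 h'; exact h2 h']

lemma icycle_congr {n : ℕ} {c : Fin n → V} (h : IsInducedCycleOn G' n c)
    (hadj : ∀ i j : Fin n, G.Adj (c i) (c j) ↔ G'.Adj (c i) (c j)) :
    IsInducedCycleOn G n c :=
  ⟨h.1, h.2.1, fun i j => (hadj i j).trans (h.2.2 i j)⟩

lemma icycle_reindex {n : ℕ} {c : Fin n → V} (h : IsInducedCycleOn G n c)
    (σ : Fin n → Fin n) (hinj : Function.Injective σ)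
    (hσ : ∀ i j : Fin n,
      (((σ i).val + 1) % n = (σ j).val ∨ ((σ j).val + 1) % n = (σ i).val) ↔
      ((i.val + 1) % n = j.val ∨ (j.val + 1) % n = i.val)) :
    IsInducedCycleOn G n (c ∘ σ) :=
  ⟨h.1, h.2.1.comp hinj, fun i j => (h.2.2 (σ i) (σ j)).trans (hσ i j)⟩

/-! ### modular arithmetic helpers -/

lemma mod_shift_iff {n : ℕ} (x y s : ℕ) : x % n = y % n ↔ (x + s) % n = (y + s) % n :=
  ⟨fun h => Nat.ModEq.add_right s h, fun h => Nat.ModEq.add_right_cancel' s h⟩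

lemma rot_lt {n : ℕ} (hn : 0 < n) (a t : ℕ) : (a + t) % n < n := Nat.mod_lt _ hn

lemma exists_rot {n : ℕ} (t a : ℕ) (ha : a < n) : ∃ b, b < n ∧ (b + t) % n = a := by
  have hn : 0 < n := by omega
  refine ⟨(a + (n - t % n)) % n, Nat.mod_lt _ hn, ?_⟩
  have h1 : ((a + (n - t % n)) % n + t) % n = (a + (n - t % n) + t) % n := by
    rw [Nat.mod_add_mod]
  have h2 : a + (n - t % n) + t = a + n + n * (t / n) := by
    have := Nat.div_add_mod t n
    have : t % n ≤ n := le_of_lt (Nat.mod_lt _ hn)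
    omega
  rw [h1, h2]
  rw [Nat.add_mul_mod_self_left, Nat.add_mod_right, Nat.mod_eq_of_lt ha]

lemma rot_cons {n : ℕ} (t : ℕ) {i j : ℕ} (hj : j < n) :
    ((i + t) % n + 1) % n = (j + t) % n ↔ (i + 1) % n = j := by
  have hn : 0 < n := by omega
  rw [Nat.mod_add_mod]
  have h1 : i + t + 1 = (i + 1) + t := by omega
  rw [h1]
  rw [← mod_shift_iff (i+1) j t]
  rw [Nat.mod_eq_of_lt hj]

end AvoidAux
namespace AvoidAux

variable {V : Type*} {G G' : SimpleGraph V}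

lemma icycle_rotate {n : ℕ} {c : Fin n → V} (h : IsInducedCycleOn G n c) (t : ℕ) :
    IsInducedCycleOn G n
      (fun i : Fin n => c ⟨(i.val + t) % n, Nat.mod_lt _ (Nat.lt_of_le_of_lt (Nat.zero_le _) i.isLt)⟩) ∧
    Set.range c ⊆ Set.range
      (fun i : Fin n => c ⟨(i.val + t) % n, Nat.mod_lt _ (Nat.lt_of_le_of_lt (Nat.zero_le _) i.isLt)⟩) := by
  have hn : 0 < n := by have := h.1; omega
  constructor
  · apply icycle_reindex h
      (fun i : Fin n => (⟨(i.val + t) % n, Nat.mod_lt _ (Nat.lt_of_le_of_lt (Nat.zero_le _) i.isLt)⟩ : Fin n))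
    · intro a b hab
      have h2 : (a.val + t) % n = (b.val + t) % n := congrArg Fin.val hab
      have h3 : a.val % n = b.val % n := (mod_shift_iff _ _ t).mpr h2
      rw [Nat.mod_eq_of_lt a.isLt, Nat.mod_eq_of_lt b.isLt] at h3
      exact Fin.ext h3
    · intro i j
      simp only []
      rw [rot_cons t j.isLt, rot_cons t i.isLt]
  · rintro x ⟨j, rfl⟩
    obtain ⟨b, hb, hbt⟩ := exists_rot t j.val j.isLt
    exact ⟨⟨b, hb⟩, by simp only []; congr 1; exact Fin.ext hbt⟩

lemma icycle_reverse {n : ℕ} {c : Fin n → V} (h : IsInducedCycleOn G n c) :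
    IsInducedCycleOn G n
      (fun i : Fin n => c ⟨(n - i.val) % n, Nat.mod_lt _ (Nat.lt_of_le_of_lt (Nat.zero_le _) i.isLt)⟩) ∧
    Set.range c ⊆ Set.range
      (fun i : Fin n => c ⟨(n - i.val) % n, Nat.mod_lt _ (Nat.lt_of_le_of_lt (Nat.zero_le _) i.isLt)⟩) := by
  have hn : 0 < n := by have := h.1; omega
  have hrev : ∀ x y : ℕ, x < n → y < n →
      (((n - x) % n + 1) % n = (n - y) % n ↔ (y + 1) % n = x) := by
    intro x y hx hy
    rw [Nat.mod_add_mod]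
    rw [mod_shift_iff (n - x + 1) (n - y) (x + y)]
    have e1 : n - x + 1 + (x + y) = (y + 1) + n := by omega
    have e2 : n - y + (x + y) = x + n := by omega
    rw [e1, e2, Nat.add_mod_right, Nat.add_mod_right, Nat.mod_eq_of_lt hx]
  constructor
  · apply icycle_reindex h
      (fun i : Fin n => (⟨(n - i.val) % n, Nat.mod_lt _ (Nat.lt_of_le_of_lt (Nat.zero_le _) i.isLt)⟩ : Fin n))
    · intro a b hab
      have h2 : (n - a.val) % n = (n - b.val) % n := congrArg Fin.val hab
      have h4 := (mod_shift_iff (n - a.val) (n - b.val) (a.val + b.val)).mp h2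
      have e1 : n - a.val + (a.val + b.val) = b.val + n := by
        have := a.isLt; omega
      have e2 : n - b.val + (a.val + b.val) = a.val + n := by
        have := b.isLt; omega
      rw [e1, e2, Nat.add_mod_right, Nat.add_mod_right,
        Nat.mod_eq_of_lt a.isLt, Nat.mod_eq_of_lt b.isLt] at h4
      exact Fin.ext h4.symm
    · intro i j
      simp only []
      rw [hrev i.val j.val i.isLt j.isLt, hrev j.val i.val j.isLt i.isLt]
      exact Or.comm
  · rintro x ⟨j, rfl⟩
    refine ⟨⟨(n - j.val) % n, Nat.mod_lt _ hn⟩, ?_⟩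
    simp only []
    congr 1
    apply Fin.ext
    show (n - (n - j.val) % n) % n = j.val
    rcases Nat.eq_zero_or_pos j.val with hj | hj
    · rw [hj]
      simp [Nat.mod_self]
    · have hjl := j.isLt
      rw [Nat.mod_eq_of_lt (by omega : n - j.val < n)]
      rw [show n - (n - j.val) = j.val by omega, Nat.mod_eq_of_lt j.isLt]

/-- From an induced path `q` (of length `m ≥ 3`) and a vertex `w` adjacent to exactly
the two endpoints of `q`, build an induced cycle containing `q`. -/
lemma cycle_ext {m : ℕ} (hm : 3 ≤ m) {q : Fin m → V} (hq : IsInducedPathOn G m q) {w : V}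
    (hw0 : G.Adj w (q ⟨0, by omega⟩)) (hwl : G.Adj w (q ⟨m - 1, by omega⟩))
    (hwmid : ∀ i : Fin m, i.val ≠ 0 → i.val ≠ m - 1 → ¬ G.Adj w (q i))
    (hwr : w ∉ Set.range q) : InInducedCycle G q := by
  refine ⟨m + 1, fun i : Fin (m+1) => if h : i.val < m then q ⟨i.val, h⟩ else w, ?_, ?_⟩
  · apply icycle_of (by omega)
    · intro a b hab
      have ha2 := a.isLt
      have hb2 := b.isLt
      by_cases ha : a.val < m <;> by_cases hb : b.val < m <;>
        simp only [ha, hb, dif_pos, dif_neg, dite_true, dite_false] at hab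
      · have h2 := congrArg Fin.val (hq.1 hab)
        simp only [] at h2
        exact Fin.ext (by omega)
      · exact absurd ⟨_, hab⟩ hwr
      · exact absurd ⟨_, hab.symm⟩ hwr
      · exact Fin.ext (by omega)
    · intro i
      have hi2 := i.isLt
      by_cases hi : i.val < m - 1
      · have e1 : (i.val + 1) % (m + 1) = i.val + 1 := Nat.mod_eq_of_lt (by omega)
        rw [dif_pos (show i.val < m by omega)]
        rw [dif_pos (show (i.val + 1) % (m+1) < m by omega)]
        apply ipath_adj hq
        show i.val + 1 = (i.val + 1) % (m + 1)
        omega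
      · by_cases hie : i.val = m - 1
        · have e1 : (i.val + 1) % (m + 1) = m := by rw [Nat.mod_eq_of_lt (by omega)]; omega
          rw [dif_pos (show i.val < m by omega), dif_neg (show ¬ ((i.val + 1) % (m+1) < m) by omega)]
          have e2 : (⟨i.val, by omega⟩ : Fin m) = ⟨m - 1, by omega⟩ :=
            Fin.ext (show i.val = m - 1 by omega)
          rw [e2]
          exact hwl.symm
        · have hi3 : i.val = m := by omega
          have e1 : (i.val + 1) % (m + 1) = 0 := by
            rw [show i.val + 1 = m + 1 by omega]
            simp [Nat.mod_self]
          rw [dif_neg (show ¬ (i.val < m) by omega),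
            dif_pos (show (i.val + 1) % (m+1) < m by omega)]
          have e2 : (⟨(i.val + 1) % (m+1), by omega⟩ : Fin m) = ⟨0, by omega⟩ := Fin.ext e1
          rw [e2]
          exact hw0
    · intro i j h1 h2
      have hi2 := i.isLt
      have hj2 := j.isLt
      by_cases hi : i.val < m <;> by_cases hj : j.val < m
      · rw [dif_pos hi, dif_pos hj]
        apply ipath_nadj hq <;> show ¬ _ = _
        · intro hc
          apply h1
          rw [Nat.mod_eq_of_lt (by omega : i.val + 1 < m + 1)]
          exact hc
        · intro hc
          apply h2
          rw [Nat.mod_eq_of_lt (by omega : j.val + 1 < m + 1)]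
          exact hc
      · rw [dif_pos hi, dif_neg hj]
        have hjm : j.val = m := by omega
        have e1 : (i.val + 1) % (m+1) = i.val + 1 := Nat.mod_eq_of_lt (by omega)
        have e2 : (j.val + 1) % (m+1) = 0 := by
          rw [show j.val + 1 = m + 1 by omega]; simp [Nat.mod_self]
        intro hadj
        exact hwmid ⟨i.val, hi⟩ (show i.val ≠ 0 by omega) (show i.val ≠ m - 1 by omega) hadj.symm
      · rw [dif_neg hi, dif_pos hj]
        have him : i.val = m := by omega
        have e1 : (i.val + 1) % (m+1) = 0 := by
          rw [show i.val + 1 = m + 1 by omega]; simp [Nat.mod_self]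
        have e2 : (j.val + 1) % (m+1) = j.val + 1 := Nat.mod_eq_of_lt (by omega)
        intro hadj
        exact hwmid ⟨j.val, hj⟩ (show j.val ≠ 0 by omega) (show j.val ≠ m - 1 by omega) hadj
      · rw [dif_neg hi, dif_neg hj]
        exact G.loopless.irrefl w
  · intro x hx
    obtain ⟨j, rfl⟩ := hx
    refine ⟨⟨j.val, by have := j.isLt; omega⟩, ?_⟩
    show (if h : j.val < m then q ⟨j.val, h⟩ else w) = q j
    rw [dif_pos j.isLt]

end AvoidAux
namespace AvoidAux

variable {V : Type*} {G : SimpleGraph V}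

lemma succ_mod_eq_zero_iff {n j : ℕ} (hj : j < n) : (j + 1) % n = 0 ↔ j + 1 = n := by
  constructor
  · intro h
    have h2 := Nat.dvd_of_mod_eq_zero h
    have h3 := Nat.le_of_dvd (by omega) h2
    omega
  · intro h
    rw [h, Nat.mod_self]

/-! ### mergeGraph lemmas -/

lemma merge_isolated (w u : V) : ∀ x, ¬ (mergeGraph G w u).Adj u x := by
  intro x h
  exact h.2.1 rfl

lemma merge_adj_iff {w u a b : V} (ha : a ≠ w) (ha' : a ≠ u) (hb : b ≠ w) (hb' : b ≠ u) :
    (mergeGraph G w u).Adj a b ↔ G.Adj a b := by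
  constructor
  · rintro ⟨h1, h2, h3, h | ⟨h, _⟩ | ⟨h, _⟩⟩
    · exact h
    · exact absurd h ha
    · exact absurd h hb
  · intro h
    exact ⟨G.ne_of_adj h, ha', hb', Or.inl h⟩

lemma merge_adj_w {w u x : V} (hwu : G.Adj w u) (hx : x ≠ w) (hx' : x ≠ u) :
    (mergeGraph G w u).Adj w x ↔ (G.Adj w x ∨ G.Adj u x) := by
  constructor
  · rintro ⟨h1, h2, h3, h | ⟨_, h⟩ | ⟨h, _⟩⟩
    · exact Or.inl h
    · exact Or.inr h
    · exact absurd h hx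
  · intro h
    refine ⟨Ne.symm hx, G.ne_of_adj hwu, hx', ?_⟩
    rcases h with h | h
    · exact Or.inl h
    · exact Or.inr (Or.inl ⟨rfl, h⟩)

/-! ### lifting cycle constructions -/

/-- Replace the vertex at position 0 by `u`. -/
lemma icycle_replace {n : ℕ} (h3 : 3 ≤ n) {e : Fin n → V} {u : V}
    (hinj : Function.Injective e) (hu : u ∉ Set.range e)
    (hα' : G.Adj u (e ⟨1, by omega⟩))
    (hβ' : G.Adj u (e ⟨n - 1, by omega⟩))
    (hpairs : ∀ i j : Fin n, i.val ≠ 0 → j.val ≠ 0 →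
      (G.Adj (e i) (e j) ↔ ((i.val + 1) % n = j.val ∨ (j.val + 1) % n = i.val)))
    (hufar : ∀ j : Fin n, j.val ≠ 0 → j.val ≠ 1 → j.val ≠ n - 1 → ¬ G.Adj u (e j)) :
    ∃ (m : ℕ) (d : Fin m → V), IsInducedCycleOn G m d ∧
      ∀ x ∈ Set.range e, x ≠ e ⟨0, by omega⟩ → x ∈ Set.range d := by
  refine ⟨n, fun i : Fin n => if i.val = 0 then u else e i, ?_, ?_⟩
  · apply icycle_of h3
    · intro a b hab
      by_cases ha : a.val = 0 <;> by_cases hb : b.val = 0 <;>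
        simp only [ha, hb, if_pos, if_neg, ite_true, ite_false] at hab
      · exact Fin.ext (by omega)
      · exact absurd ⟨_, hab.symm⟩ hu
      · exact absurd ⟨_, hab⟩ hu
      · exact hinj hab
    · intro i
      have hi2 := i.isLt
      by_cases hi : i.val = 0
      · rw [if_pos hi, if_neg (show ¬ ((i.val + 1) % n = 0) by
          rw [succ_mod_eq_zero_iff (by omega)]; omega)]
        have e1 : (⟨(i.val + 1) % n, Nat.mod_lt _ (by omega)⟩ : Fin n) = ⟨1, by omega⟩ := by
          apply Fin.ext
          show (i.val + 1) % n = 1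
          rw [hi, Nat.mod_eq_of_lt (by omega)]
        rw [e1]
        exact hα'
      · by_cases hil : i.val = n - 1
        · have e0 : (i.val + 1) % n = 0 := by
            rw [succ_mod_eq_zero_iff (by omega)]; omega
          rw [if_neg hi, if_pos e0]
          rw [show i = (⟨n - 1, by omega⟩ : Fin n) from Fin.ext (show i.val = n - 1 by omega)]
          exact hβ'.symm
        · have e1 : (i.val + 1) % n = i.val + 1 := Nat.mod_eq_of_lt (by omega)
          rw [if_neg hi, if_neg (show ¬ ((i.val + 1) % n = 0) by omega)]
          refine (hpairs i ⟨(i.val + 1) % n, Nat.mod_lt _ (by omega)⟩ hi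
            (show (i.val + 1) % n ≠ 0 by omega)).mpr ?_
          left
          rfl
    · intro i j h1 h2
      have hi2 := i.isLt
      have hj2 := j.isLt
      by_cases hi : i.val = 0 <;> by_cases hj : j.val = 0
      · rw [if_pos hi, if_pos hj]
        exact G.loopless.irrefl u
      · rw [if_pos hi, if_neg hj]
        have e1 : (i.val + 1) % n = 1 := by rw [hi]; exact Nat.mod_eq_of_lt (by omega)
        have hjl : j.val ≠ n - 1 := by
          intro hc
          apply h2
          have e2 : (j.val + 1) % n = 0 := by rw [succ_mod_eq_zero_iff (by omega)]; omega
          omega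
        exact hufar j hj (by omega) hjl
      · rw [if_neg hi, if_pos hj]
        have e1 : (j.val + 1) % n = 1 := by rw [hj]; exact Nat.mod_eq_of_lt (by omega)
        have hil : i.val ≠ n - 1 := by
          intro hc
          apply h1
          have e2 : (i.val + 1) % n = 0 := by rw [succ_mod_eq_zero_iff (by omega)]; omega
          omega
        intro hadj
        exact hufar i hi (by omega) hil hadj.symm
      · rw [if_neg hi, if_neg hj]
        intro hadj
        rcases (hpairs i j hi hj).mp hadj with h | h
        · exact h1 h
        · exact h2 h
  · rintro x ⟨j, rfl⟩ hx
    have hj0 : j.val ≠ 0 := by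
      intro hc
      apply hx
      congr 1
      exact Fin.ext hc
    refine ⟨j, ?_⟩
    show (if j.val = 0 then u else e j) = e j
    rw [if_neg hj0]

/-- Insert `u` between positions `n-1` and `0`. -/
lemma icycle_insert {n : ℕ} (h3 : 3 ≤ n) {e : Fin n → V} {u : V}
    (hinj : Function.Injective e) (hu : u ∉ Set.range e)
    (hwu : G.Adj (e ⟨0, by omega⟩) u)
    (hα : G.Adj (e ⟨0, by omega⟩) (e ⟨1, by omega⟩))
    (hβ' : G.Adj u (e ⟨n - 1, by omega⟩))
    (hnα' : ¬ G.Adj u (e ⟨1, by omega⟩))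
    (hnβ : ¬ G.Adj (e ⟨0, by omega⟩) (e ⟨n - 1, by omega⟩))
    (hpairs : ∀ i j : Fin n, i.val ≠ 0 → j.val ≠ 0 →
      (G.Adj (e i) (e j) ↔ ((i.val + 1) % n = j.val ∨ (j.val + 1) % n = i.val)))
    (hufar : ∀ j : Fin n, j.val ≠ 0 → j.val ≠ 1 → j.val ≠ n - 1 → ¬ G.Adj u (e j))
    (hwfar : ∀ j : Fin n, j.val ≠ 0 → j.val ≠ 1 → j.val ≠ n - 1 → ¬ G.Adj (e ⟨0, by omega⟩) (e j)) :
    ∃ (m : ℕ) (d : Fin m → V), IsInducedCycleOn G m d ∧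
      ∀ x ∈ Set.range e, x ∈ Set.range d := by
  refine ⟨n + 1, fun i : Fin (n+1) => if h : i.val < n then e ⟨i.val, h⟩ else u, ?_, ?_⟩
  · apply icycle_of (by omega)
    · intro a b hab
      have ha2 := a.isLt
      have hb2 := b.isLt
      by_cases ha : a.val < n <;> by_cases hb : b.val < n <;>
        simp only [ha, hb, dif_pos, dif_neg, dite_true, dite_false] at hab
      · have h2 := congrArg Fin.val (hinj hab)
        simp only [] at h2
        exact Fin.ext (by omega)
      · exact absurd ⟨_, hab⟩ hu
      · exact absurd ⟨_, hab.symm⟩ hu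
      · exact Fin.ext (by omega)
    · intro i
      have hi2 := i.isLt
      by_cases hi : i.val < n - 1
      · have e1 : (i.val + 1) % (n + 1) = i.val + 1 := Nat.mod_eq_of_lt (by omega)
        rw [dif_pos (show i.val < n by omega),
          dif_pos (show (i.val + 1) % (n + 1) < n by omega)]
        by_cases hi0 : i.val = 0
        · have ea : (⟨i.val, by omega⟩ : Fin n) = ⟨0, by omega⟩ := Fin.ext hi0
          have eb : (⟨(i.val + 1) % (n+1), by omega⟩ : Fin n) = ⟨1, by omega⟩ :=
            Fin.ext (show (i.val + 1) % (n + 1) = 1 by omega)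
          rw [ea, eb]
          exact hα
        · refine (hpairs ⟨i.val, by omega⟩ ⟨(i.val + 1) % (n+1), by omega⟩ hi0
            (show (i.val + 1) % (n+1) ≠ 0 by omega)).mpr ?_
          left
          show (i.val + 1) % n = (i.val + 1) % (n + 1)
          rw [e1, Nat.mod_eq_of_lt (by omega)]
      · by_cases hie : i.val = n - 1
        · have e1 : (i.val + 1) % (n + 1) = n := by rw [Nat.mod_eq_of_lt (by omega)]; omega
          rw [dif_pos (show i.val < n by omega),
            dif_neg (show ¬ ((i.val + 1) % (n + 1) < n) by omega)]
          have ea : (⟨i.val, by omega⟩ : Fin n) = ⟨n - 1, by omega⟩ := Fin.ext hie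
          rw [ea]
          exact hβ'.symm
        · have hin : i.val = n := by omega
          have e1 : (i.val + 1) % (n + 1) = 0 := by
            rw [show i.val + 1 = n + 1 by omega, Nat.mod_self]
          rw [dif_neg (show ¬ (i.val < n) by omega),
            dif_pos (show (i.val + 1) % (n + 1) < n by omega)]
          have ea : (⟨(i.val + 1) % (n+1), by omega⟩ : Fin n) = ⟨0, by omega⟩ := Fin.ext e1
          rw [ea]
          exact hwu.symm
    · intro i j h1 h2
      have hi2 := i.isLt
      have hj2 := j.isLt
      by_cases hi : i.val < n <;> by_cases hj : j.val < n
      · rw [dif_pos hi, dif_pos hj]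
        have e1 : (i.val + 1) % (n + 1) = i.val + 1 := Nat.mod_eq_of_lt (by omega)
        have e2 : (j.val + 1) % (n + 1) = j.val + 1 := Nat.mod_eq_of_lt (by omega)
        by_cases hi0 : i.val = 0 <;> by_cases hj0 : j.val = 0
        · have eab : (⟨i.val, hi⟩ : Fin n) = ⟨j.val, hj⟩ := Fin.ext (show i.val = j.val by omega)
          rw [eab]
          exact G.loopless.irrefl _
        · -- i = 0, j ≠ 0 : need ¬ Adj (e 0) (e j), j ∉ {1, n}
          have ea : (⟨i.val, hi⟩ : Fin n) = ⟨0, by omega⟩ := Fin.ext hi0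
          rw [ea]
          by_cases hjl : j.val = n - 1
          · have eb : (⟨j.val, hj⟩ : Fin n) = ⟨n - 1, by omega⟩ := Fin.ext hjl
            rw [eb]
            exact hnβ
          · exact hwfar ⟨j.val, hj⟩ hj0 (show j.val ≠ 1 by omega) (show j.val ≠ n - 1 by omega)
        · have eb : (⟨j.val, hj⟩ : Fin n) = ⟨0, by omega⟩ := Fin.ext hj0
          rw [eb]
          intro hadj
          by_cases hil : i.val = n - 1
          · have ea : (⟨i.val, hi⟩ : Fin n) = ⟨n - 1, by omega⟩ := Fin.ext hil
            rw [ea] at hadj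
            exact hnβ hadj.symm
          · exact hwfar ⟨i.val, hi⟩ hi0 (show i.val ≠ 1 by omega) (show i.val ≠ n - 1 by omega)
              hadj.symm
        · intro hadj
          rcases (hpairs ⟨i.val, hi⟩ ⟨j.val, hj⟩ hi0 hj0).mp hadj with h | h
          · have h' : (i.val + 1) % n = j.val := h
            have : i.val + 1 = j.val ∨ (i.val + 1 = n ∧ j.val = 0) := by
              rcases Nat.lt_or_ge (i.val + 1) n with hc | hc
              · left; rw [Nat.mod_eq_of_lt hc] at h'; exact h'
              · right
                have hc2 : i.val + 1 = n := by omega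
                rw [hc2, Nat.mod_self] at h'
                omega
            omega
          · have h' : (j.val + 1) % n = i.val := h
            have : j.val + 1 = i.val ∨ (j.val + 1 = n ∧ i.val = 0) := by
              rcases Nat.lt_or_ge (j.val + 1) n with hc | hc
              · left; rw [Nat.mod_eq_of_lt hc] at h'; exact h'
              · right
                have hc2 : j.val + 1 = n := by omega
                rw [hc2, Nat.mod_self] at h'
                omega
            omega
      · -- j = n : d j = u, i < n with i ≠ n-1 (h1), i ≠ 0 (h2)
        rw [dif_pos hi, dif_neg hj]
        have hjn : j.val = n := by omega
        have e1 : (i.val + 1) % (n + 1) = i.val + 1 := Nat.mod_eq_of_lt (by omega)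
        have e2 : (j.val + 1) % (n + 1) = 0 := by
          rw [show j.val + 1 = n + 1 by omega, Nat.mod_self]
        intro hadj
        by_cases hi1 : i.val = 1
        · have ea : (⟨i.val, hi⟩ : Fin n) = ⟨1, by omega⟩ := Fin.ext hi1
          rw [ea] at hadj
          exact hnα' hadj.symm
        · exact hufar ⟨i.val, hi⟩ (show i.val ≠ 0 by omega) (show i.val ≠ 1 by omega)
            (show i.val ≠ n - 1 by omega) hadj.symm
      · rw [dif_neg hi, dif_pos hj]
        have hin : i.val = n := by omega
        have e1 : (i.val + 1) % (n + 1) = 0 := by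
          rw [show i.val + 1 = n + 1 by omega, Nat.mod_self]
        have e2 : (j.val + 1) % (n + 1) = j.val + 1 := Nat.mod_eq_of_lt (by omega)
        intro hadj
        by_cases hj1 : j.val = 1
        · have eb : (⟨j.val, hj⟩ : Fin n) = ⟨1, by omega⟩ := Fin.ext hj1
          rw [eb] at hadj
          exact hnα' hadj
        · exact hufar ⟨j.val, hj⟩ (show j.val ≠ 0 by omega) (show j.val ≠ 1 by omega)
            (show j.val ≠ n - 1 by omega) hadj
      · rw [dif_neg hi, dif_neg hj]
        exact G.loopless.irrefl u
  · rintro x ⟨j, rfl⟩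
    refine ⟨⟨j.val, by have := j.isLt; omega⟩, ?_⟩
    show (if h : j.val < n then e ⟨j.val, h⟩ else u) = e j
    rw [dif_pos j.isLt]

end AvoidAux
namespace AvoidAux

variable {V : Type*} {G : SimpleGraph V}

lemma merge_lift_aux {w u : V} (hwu : G.Adj w u) {n : ℕ} (h3 : 3 ≤ n) {f : Fin n → V}
    (hf : IsInducedCycleOn (mergeGraph G w u) n f) (hf0 : f ⟨0, by omega⟩ = w)
    (hu : u ∉ Set.range f)
    (hc : G.Adj w (f ⟨1, by omega⟩) ∨ (G.Adj u (f ⟨1, by omega⟩) ∧ G.Adj u (f ⟨n - 1, by omega⟩))) :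
    ∃ (m : ℕ) (d : Fin m → V), IsInducedCycleOn G m d ∧
      ∀ x ∈ Set.range f, x ≠ w → x ∈ Set.range d := by
  have hinj : Function.Injective f := hf.2.1
  have hne : ∀ j : Fin n, j.val ≠ 0 → f j ≠ w ∧ f j ≠ u := by
    intro j hj
    constructor
    · intro hcw
      apply hj
      have : j = ⟨0, by omega⟩ := hinj (hcw.trans hf0.symm)
      exact congrArg Fin.val this
    · exact fun hcu => hu ⟨j, hcu⟩
  have hpairs : ∀ i j : Fin n, i.val ≠ 0 → j.val ≠ 0 →
      (G.Adj (f i) (f j) ↔ ((i.val + 1) % n = j.val ∨ (j.val + 1) % n = i.val)) := by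
    intro i j hi hj
    exact (merge_adj_iff (hne i hi).1 (hne i hi).2 (hne j hj).1 (hne j hj).2).symm.trans
      (hf.2.2 i j)
  have hfar : ∀ j : Fin n, j.val ≠ 0 → j.val ≠ 1 → j.val ≠ n - 1 →
      ¬ G.Adj w (f j) ∧ ¬ G.Adj u (f j) := by
    intro j h0 h1 hl
    have hj2 := j.isLt
    have hnon : ¬ (mergeGraph G w u).Adj (f ⟨0, by omega⟩) (f j) := by
      apply icycle_nadj hf
      · show ¬ (0 + 1) % n = j.val
        rw [Nat.mod_eq_of_lt (by omega)]
        omega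
      · show ¬ (j.val + 1) % n = 0
        rw [succ_mod_eq_zero_iff (by omega)]
        omega
    rw [hf0] at hnon
    rw [merge_adj_w hwu (hne j h0).1 (hne j h0).2] at hnon
    push_neg at hnon
    exact hnon
  have hadj1 : G.Adj w (f ⟨1, by omega⟩) ∨ G.Adj u (f ⟨1, by omega⟩) := by
    have h := icycle_adj hf (i := ⟨0, by omega⟩) (j := ⟨1, by omega⟩)
      (by show (0 + 1) % n = 1; rw [Nat.mod_eq_of_lt (by omega)])
    rw [hf0] at h
    exact (merge_adj_w hwu (hne _ (by omega : (1:ℕ) ≠ 0)).1 (hne _ (by omega : (1:ℕ) ≠ 0)).2).mp h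
  have hadjl : G.Adj w (f ⟨n - 1, by omega⟩) ∨ G.Adj u (f ⟨n - 1, by omega⟩) := by
    have h := icycle_adj hf (i := ⟨n - 1, by omega⟩) (j := ⟨0, by omega⟩)
      (by show (n - 1 + 1) % n = 0; rw [show n - 1 + 1 = n by omega, Nat.mod_self])
    rw [hf0] at h
    have hne' := hne ⟨n - 1, by omega⟩ (by show n - 1 ≠ 0; omega)
    exact (merge_adj_w hwu hne'.1 hne'.2).mp h.symm
  by_cases hrep : G.Adj u (f ⟨1, by omega⟩) ∧ G.Adj u (f ⟨n - 1, by omega⟩)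
  · -- replace w by u
    obtain ⟨m, d, hd, hrange⟩ := icycle_replace h3 hinj hu hrep.1 hrep.2 hpairs
      (fun j a b c => (hfar j a b c).2)
    refine ⟨m, d, hd, ?_⟩
    intro x hx hxw
    apply hrange x hx
    rw [hf0]
    exact hxw
  · have hα : G.Adj w (f ⟨1, by omega⟩) := by
      rcases hc with h | h
      · exact h
      · exact absurd h hrep
    by_cases hβ : G.Adj w (f ⟨n - 1, by omega⟩)
    · -- keep the cycle as it is
      refine ⟨n, f, ?_, fun x hx _ => hx⟩
      apply icycle_congr hf
      intro i j
      have hup : ∀ j : Fin n, j.val ≠ 0 → G.Adj u (f j) → G.Adj w (f j) := by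
        intro j hj0 hadj
        by_cases hj1 : j.val = 1
        · rw [show j = (⟨1, by omega⟩ : Fin n) from Fin.ext hj1]
          exact hα
        · by_cases hjl : j.val = n - 1
          · rw [show j = (⟨n - 1, by omega⟩ : Fin n) from Fin.ext hjl]
            exact hβ
          · exact absurd hadj (hfar j hj0 hj1 hjl).2
      by_cases hi : i.val = 0 <;> by_cases hj : j.val = 0
      · rw [show i = (⟨0, by omega⟩ : Fin n) from Fin.ext hi,
          show j = (⟨0, by omega⟩ : Fin n) from Fin.ext hj, hf0]
        exact iff_of_false (G.loopless.irrefl w) ((mergeGraph G w u).loopless.irrefl w)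
      · rw [show i = (⟨0, by omega⟩ : Fin n) from Fin.ext hi, hf0]
        rw [merge_adj_w hwu (hne j hj).1 (hne j hj).2]
        constructor
        · exact Or.inl
        · rintro (h | h)
          · exact h
          · exact hup j hj h
      · rw [show j = (⟨0, by omega⟩ : Fin n) from Fin.ext hj, hf0]
        rw [G.adj_comm, (mergeGraph G w u).adj_comm]
        rw [merge_adj_w hwu (hne i hi).1 (hne i hi).2]
        constructor
        · exact Or.inl
        · rintro (h | h)
          · exact h
          · exact hup i hi h
      · exact (merge_adj_iff (hne i hi).1 (hne i hi).2 (hne j hj).1 (hne j hj).2).symm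
    · -- mixed : α, ¬β, hence β' and ¬α'
      have hβ' : G.Adj u (f ⟨n - 1, by omega⟩) := by
        rcases hadjl with h | h
        · exact absurd h hβ
        · exact h
      have hnα' : ¬ G.Adj u (f ⟨1, by omega⟩) := fun h => hrep ⟨h, hβ'⟩
      obtain ⟨m, d, hd, hrange⟩ := icycle_insert h3 hinj hu (by rw [hf0]; exact hwu)
        (by rw [hf0]; exact hα) hβ' hnα' (by rw [hf0]; exact hβ) hpairs
        (fun j a b c => (hfar j a b c).2) (by rw [hf0]; exact fun j a b c => (hfar j a b c).1)
      exact ⟨m, d, hd, fun x hx _ => hrange x hx⟩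

lemma merge_cycle_lift {w u : V} (hwu : G.Adj w u) {n : ℕ} {c : Fin n → V}
    (hcy : IsInducedCycleOn (mergeGraph G w u) n c) (hu : u ∉ Set.range c) :
    ∃ (m : ℕ) (d : Fin m → V), IsInducedCycleOn G m d ∧
      ∀ x ∈ Set.range c, x ≠ w → x ∈ Set.range d := by
  have h3 := hcy.1
  by_cases hw : w ∈ Set.range c
  · obtain ⟨t, ht⟩ := hw
    obtain ⟨hrot, hrotrange⟩ := icycle_rotate hcy t.val
    set f : Fin n → V := fun i : Fin n =>
      c ⟨(i.val + t.val) % n, Nat.mod_lt _ (Nat.lt_of_le_of_lt (Nat.zero_le _) i.isLt)⟩ with hfdef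
    have hf0 : f ⟨0, by omega⟩ = w := by
      show c ⟨(0 + t.val) % n, _⟩ = w
      rw [← ht]
      congr 1
      exact Fin.ext (by show (0 + t.val) % n = t.val; rw [Nat.zero_add, Nat.mod_eq_of_lt t.isLt])
    have hfu : u ∉ Set.range f := by
      rintro ⟨i, hi⟩
      exact hu ⟨_, hi⟩
    by_cases hcase : G.Adj w (f ⟨1, by omega⟩) ∨
        (G.Adj u (f ⟨1, by omega⟩) ∧ G.Adj u (f ⟨n - 1, by omega⟩))
    · obtain ⟨m, d, hd, hrange⟩ := merge_lift_aux hwu h3 hrot hf0 hfu hcase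
      exact ⟨m, d, hd, fun x hx hxw => hrange x (hrotrange hx) hxw⟩
    · -- use the reversed cycle
      push_neg at hcase
      obtain ⟨hrev, hrevrange⟩ := icycle_reverse hrot
      set g : Fin n → V := fun i : Fin n =>
        f ⟨(n - i.val) % n, Nat.mod_lt _ (Nat.lt_of_le_of_lt (Nat.zero_le _) i.isLt)⟩ with hgdef
      have hg0 : g ⟨0, by omega⟩ = w := by
        show f ⟨(n - 0) % n, _⟩ = w
        rw [← hf0]
        congr 1
        exact Fin.ext (by show (n - 0) % n = 0; rw [Nat.sub_zero, Nat.mod_self])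
      have hg1 : g ⟨1, by omega⟩ = f ⟨n - 1, by omega⟩ := by
        show f ⟨(n - 1) % n, _⟩ = f ⟨n - 1, _⟩
        congr 1
        exact Fin.ext (by show (n - 1) % n = n - 1; exact Nat.mod_eq_of_lt (by omega))
      have hgu : u ∉ Set.range g := by
        rintro ⟨i, hi⟩
        exact hfu ⟨_, hi⟩
      have hgα : G.Adj w (g ⟨1, by omega⟩) := by
        rw [hg1]
        -- we know: ¬ α, hence α' holds, hence ¬ β', hence β
        have hα' : G.Adj u (f ⟨1, by omega⟩) := by
          have h := icycle_adj hrot (i := ⟨0, by omega⟩) (j := ⟨1, by omega⟩)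
            (by show (0 + 1) % n = 1; rw [Nat.mod_eq_of_lt (by omega)])
          rw [hf0] at h
          have hne1 : f ⟨1, by omega⟩ ≠ w := by
            intro hcw
            have h2 : (⟨1, by omega⟩ : Fin n) = ⟨0, by omega⟩ := hrot.2.1 (hcw.trans hf0.symm)
            have h3' : (1 : ℕ) = 0 := congrArg Fin.val h2
            omega
          have hne1' : f ⟨1, by omega⟩ ≠ u := fun hcu => hfu ⟨_, hcu⟩
          rcases (merge_adj_w hwu hne1 hne1').mp h with h | h
          · exact absurd h hcase.1
          · exact h
        have hnβ' : ¬ G.Adj u (f ⟨n - 1, by omega⟩) := fun h => (hcase.2 hα') h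
        have h := icycle_adj hrot (i := ⟨n - 1, by omega⟩) (j := ⟨0, by omega⟩)
          (by show (n - 1 + 1) % n = 0; rw [show n - 1 + 1 = n by omega, Nat.mod_self])
        rw [hf0] at h
        have hnel : f ⟨n - 1, by omega⟩ ≠ w := by
          intro hcw
          have h2 : (⟨n - 1, by omega⟩ : Fin n) = ⟨0, by omega⟩ := hrot.2.1 (hcw.trans hf0.symm)
          have h3' : n - 1 = 0 := congrArg Fin.val h2
          omega
        have hnel' : f ⟨n - 1, by omega⟩ ≠ u := fun hcu => hfu ⟨_, hcu⟩
        rcases (merge_adj_w hwu hnel hnel').mp h.symm with h | h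
        · exact h
        · exact absurd h hnβ'
      obtain ⟨m, d, hd, hrange⟩ := merge_lift_aux hwu h3 hrev hg0 hgu (Or.inl hgα)
      refine ⟨m, d, hd, ?_⟩
      intro x hx hxw
      exact hrange x (hrevrange (hrotrange hx)) hxw
  · refine ⟨n, c, ?_, fun x hx _ => hx⟩
    apply icycle_congr hcy
    intro i j
    have hiw : c i ≠ w := fun hcw => hw ⟨i, hcw⟩
    have hjw : c j ≠ w := fun hcw => hw ⟨j, hcw⟩
    have hiu : c i ≠ u := fun hcu => hu ⟨i, hcu⟩
    have hju : c j ≠ u := fun hcu => hu ⟨j, hcu⟩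
    exact (merge_adj_iff hiw hiu hjw hju).symm

end AvoidAux
namespace AvoidAux

variable {V : Type*} {G : SimpleGraph V}

noncomputable def epairs (G : SimpleGraph V) : ℕ := Set.ncard {p : V × V | G.Adj p.1 p.2}

noncomputable def meas (G : SimpleGraph V) : ℕ := (Nat.card V) ^ 3 + epairs G

lemma epairs_le [Finite V] (G : SimpleGraph V) : epairs G ≤ (Nat.card V) ^ 2 := by
  have h1 : {p : V × V | G.Adj p.1 p.2}.ncard ≤ (Set.univ : Set (V × V)).ncard :=
    Set.ncard_le_ncard (Set.subset_univ _) (Set.toFinite _)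
  rw [Set.ncard_univ, Nat.card_prod] at h1
  calc epairs G ≤ Nat.card V * Nat.card V := h1
    _ = (Nat.card V) ^ 2 := by ring

lemma merge_epairs_lt [Finite V] {w u : V} (hwu : G.Adj w u) :
    epairs (mergeGraph G w u) < epairs G := by
  classical
  set S : Set (V × V) := {p : V × V | G.Adj p.1 p.2} with hS
  set S' : Set (V × V) := {p : V × V | (mergeGraph G w u).Adj p.1 p.2} with hS'
  set φ : V × V → V × V := fun p =>
    if G.Adj p.1 p.2 then p else if p.1 = w then (u, p.2) else (p.1, u) with hφ
  have hwune : w ≠ u := G.ne_of_adj hwu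
  have hmaps : ∀ p ∈ S', φ p ∈ S \ {(w, u)} := by
    rintro ⟨a, b⟩ hp
    obtain ⟨hne, hau, hbu, hor⟩ := hp
    by_cases hG : G.Adj a b
    · refine ⟨?_, ?_⟩
      · show φ (a, b) ∈ S
        simp only [hφ, if_pos hG]
        exact hG
      simp only [hφ, if_pos hG]
      intro hc
      rw [Set.mem_singleton_iff, Prod.mk.injEq] at hc
      exact hbu hc.2
    · rcases hor with h | ⟨haw, hub⟩ | ⟨hbw, hau2⟩
      · exact absurd h hG
      · constructor
        · simp only [hφ, if_neg hG, if_pos haw]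
          exact hub
        · simp only [hφ, if_neg hG, if_pos haw]
          intro hc
          rw [Set.mem_singleton_iff, Prod.mk.injEq] at hc
          exact hwune hc.1.symm
      · have hanw : a ≠ w := by
          intro hc
          rw [hc, hbw] at hne
          exact hne rfl
        constructor
        · simp only [hφ, if_neg hG, if_neg hanw]
          exact hau2
        · simp only [hφ, if_neg hG, if_neg hanw]
          intro hc
          rw [Set.mem_singleton_iff, Prod.mk.injEq] at hc
          exact hanw hc.1
  have hinj : Set.InjOn φ S' := by
    rintro ⟨a, b⟩ hp ⟨a', b'⟩ hq hpq
    obtain ⟨hne, hau, hbu, hor⟩ := hp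
    obtain ⟨hne', hau', hbu', hor'⟩ := hq
    -- case analysis
    by_cases hG : G.Adj a b <;> by_cases hG' : G.Adj a' b'
    · simp only [hφ, if_pos hG, if_pos hG'] at hpq
      exact hpq
    · exfalso
      rcases hor' with h | ⟨haw', hub'⟩ | ⟨hbw', hau2'⟩
      · exact hG' h
      · simp only [hφ, if_pos hG, if_neg hG', if_pos haw'] at hpq
        exact hau (congrArg Prod.fst hpq)
      · have hanw' : a' ≠ w := by
          intro hc
          rw [hc, hbw'] at hne'
          exact hne' rfl
        simp only [hφ, if_pos hG, if_neg hG', if_neg hanw'] at hpq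
        exact hbu (congrArg Prod.snd hpq)
    · exfalso
      rcases hor with h | ⟨haw, hub⟩ | ⟨hbw, hau2⟩
      · exact hG h
      · simp only [hφ, if_neg hG, if_pos haw, if_pos hG'] at hpq
        exact hau' (congrArg Prod.fst hpq).symm
      · have hanw : a ≠ w := by
          intro hc
          rw [hc, hbw] at hne
          exact hne rfl
        simp only [hφ, if_neg hG, if_neg hanw, if_pos hG'] at hpq
        exact hbu' (congrArg Prod.snd hpq).symm
    · -- both moved
      rcases hor with h | ⟨haw, hub⟩ | ⟨hbw, hau2⟩
      · exact absurd h hG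
      · rcases hor' with h | ⟨haw', hub'⟩ | ⟨hbw', hau2'⟩
        · exact absurd h hG'
        · simp only [hφ, if_neg hG, if_pos haw, if_neg hG', if_pos haw'] at hpq
          rw [Prod.mk.injEq] at hpq
          rw [Prod.mk.injEq]
          exact ⟨haw.trans haw'.symm, hpq.2⟩
        · have hanw' : a' ≠ w := by
            intro hc
            rw [hc, hbw'] at hne'
            exact hne' rfl
          simp only [hφ, if_neg hG, if_pos haw, if_neg hG', if_neg hanw'] at hpq
          rw [Prod.mk.injEq] at hpq
          exact absurd hpq.1.symm hau'
      · have hanw : a ≠ w := by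
          intro hc
          rw [hc, hbw] at hne
          exact hne rfl
        rcases hor' with h | ⟨haw', hub'⟩ | ⟨hbw', hau2'⟩
        · exact absurd h hG'
        · simp only [hφ, if_neg hG, if_neg hanw, if_neg hG', if_pos haw'] at hpq
          rw [Prod.mk.injEq] at hpq
          exact absurd hpq.1 hau
        · have hanw' : a' ≠ w := by
            intro hc
            rw [hc, hbw'] at hne'
            exact hne' rfl
          simp only [hφ, if_neg hG, if_neg hanw, if_neg hG', if_neg hanw'] at hpq
          rw [Prod.mk.injEq] at hpq
          rw [Prod.mk.injEq]
          exact ⟨hpq.1, hbw.trans hbw'.symm⟩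
  have h1 : S'.ncard ≤ (S \ {(w, u)}).ncard := by
    rw [← Set.ncard_image_of_injOn hinj]
    exact Set.ncard_le_ncard (Set.image_subset_iff.mpr hmaps) (Set.toFinite _)
  have h2 : (S \ {(w, u)}).ncard < S.ncard :=
    Set.ncard_diff_singleton_lt_of_mem (by exact hwu) (Set.toFinite _)
  calc epairs (mergeGraph G w u) = S'.ncard := rfl
    _ ≤ (S \ {(w, u)}).ncard := h1
    _ < S.ncard := h2

lemma merge_meas_lt [Fintype V] {w u : V} (hwu : G.Adj w u) :
    meas (mergeGraph G w u) < meas G := by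
  have := merge_epairs_lt (G := G) hwu
  unfold meas
  omega

lemma induce_meas_lt [Fintype V] (G : SimpleGraph V) (D : Set V) (w : V) (hw : w ∉ D) :
    meas (G.induce D) < meas G := by
  have hdn : Nat.card ↥D < Nat.card V := by
    rw [Nat.card_coe_set_eq, ← Set.ncard_univ V]
    apply Set.ncard_lt_ncard _ (Set.toFinite _)
    exact ⟨Set.subset_univ _, fun hsub => hw (hsub (Set.mem_univ w))⟩
  set d := Nat.card ↥D
  set n := Nat.card V
  have h1 : epairs (G.induce D) ≤ d ^ 2 := epairs_le _
  have h2 : (d + 1) ^ 3 ≤ n ^ 3 := Nat.pow_le_pow_left (by omega) 3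
  have e1 : (d + 1) ^ 3 = d ^ 3 + 3 * d ^ 2 + 3 * d + 1 := by ring
  have h3 : meas (G.induce D) = d ^ 3 + epairs (G.induce D) := rfl
  have h4 : meas G = n ^ 3 + epairs G := rfl
  omega

end AvoidAux
namespace AvoidAux

universe u

variable {V : Type*} {G : SimpleGraph V}

/-- `p` avoids the closed neighbourhood of `w` and the set `F`. -/
def AvoidsNF (G : SimpleGraph V) (w : V) (F : Set V) {k : ℕ} (p : Fin k → V) : Prop :=
  ∀ i, p i ≠ w ∧ ¬ G.Adj w (p i) ∧ p i ∉ F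

lemma ext_mid {k : ℕ} {p : Fin k → V} {q : Fin (k + 2) → V}
    (h : ∀ i : Fin k, q i.succ.castSucc = p i) (i : Fin k) :
    q ⟨i.val + 1, by have := i.isLt; omega⟩ = p i := by
  have e : i.succ.castSucc = (⟨i.val + 1, by have := i.isLt; omega⟩ : Fin (k + 2)) :=
    Fin.ext (by simp [Fin.val_succ])
  rw [← h i, e]

/-- The statement we prove by strong induction on the measure. -/
def HFStatement (N : ℕ) : Prop :=
  ∀ {V : Type u} [Fintype V] (G : SimpleGraph V) (k : ℕ), 1 ≤ k →
    ∀ (w : V) (F : Set V), (∀ f ∈ F, ∀ x, ¬ G.Adj f x) → meas G ≤ N →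
    (∃ p : Fin k → V, IsInducedPathOn G k p ∧ AvoidsNF G w F p) →
    ∃ p : Fin k → V, IsInducedPathOn G k p ∧ AvoidsNF G w F p ∧
      ∀ q : Fin (k + 2) → V, IsExtension G p q → InInducedCycle G q

/-- If the path statement holds for all graphs of measure at most `N`, then every graph of
measure at most `N` containing an induced `P_k` contains an avoidable one. -/
lemma Tgen {N : ℕ} (ih : HFStatement.{u} N) {V : Type u} [Fintype V] (G : SimpleGraph V)
    (hm : meas G ≤ N) (k : ℕ) (hk : 1 ≤ k)
    (hex : ∃ p : Fin k → V, IsInducedPathOn G k p) :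
    ∃ p : Fin k → V, IsInducedPathOn G k p ∧
      ∀ q : Fin (k + 2) → V, IsExtension G p q → InInducedCycle G q := by
  obtain ⟨p, hp⟩ := hex
  by_cases hC : ∃ (w : V) (r : Fin k → V), IsInducedPathOn G k r ∧
      ∀ i, r i ≠ w ∧ ¬ G.Adj w (r i)
  · obtain ⟨w, r, hr, hrw⟩ := hC
    obtain ⟨Q, hQ, _, hQav⟩ := ih G k hk w ∅ (by simp) hm
      ⟨r, hr, fun i => ⟨(hrw i).1, (hrw i).2, Set.notMem_empty _⟩⟩
    exact ⟨Q, hQ, hQav⟩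
  · refine ⟨p, hp, fun q hq => ?_⟩
    exfalso
    apply hC
    refine ⟨q ⟨0, by omega⟩, (fun i : Fin k => q ⟨i.val + 2, by have := i.isLt; omega⟩),
      ipath_window (by omega) hq.1, ?_⟩
    intro i
    have hilt := i.isLt
    constructor
    · intro hc
      have h2 : (i.val + 2 : ℕ) = 0 := congrArg Fin.val (hq.1.1 hc)
      omega
    · exact fun hadj => ipath_nadj hq.1 (show (0:ℕ) + 1 ≠ i.val + 2 by omega)
        (show i.val + 2 + 1 ≠ 0 by omega) hadj

lemma mainHF : ∀ N : ℕ, HFStatement.{u} N := by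
  intro N
  induction N with
  | zero =>
    intro V _ G k hk w F hFiso hm hex
    exfalso
    haveI : Nonempty V := ⟨w⟩
    have h1 : 0 < Nat.card V := Nat.card_pos
    have h2 : 0 < (Nat.card V) ^ 3 := pow_pos h1 3
    have h3 : meas G = (Nat.card V) ^ 3 + epairs G := rfl
    omega
  | succ N ih =>
    intro V _ G k hk w F hFiso hm hex
    obtain ⟨p, hp, hpav⟩ := hex
    by_cases hC1 : ∃ u : V, G.Adj w u ∧ ∃ r : Fin k → V,
        IsInducedPathOn G k r ∧ AvoidsNF G w F r ∧ ∀ i, ¬ G.Adj u (r i)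
    · -- Case 1 : merge u into w and recurse
      obtain ⟨u, hwu, r, hr, hrav, hru⟩ := hC1
      have huiso : ∀ x, ¬ (mergeGraph G w u).Adj u x := merge_isolated w u
      have hF'iso : ∀ f ∈ insert u F, ∀ x, ¬ (mergeGraph G w u).Adj f x := by
        intro f hf x hadj
        rcases Set.mem_insert_iff.mp hf with rfl | hf
        · exact huiso x hadj
        · rcases hadj with ⟨h1, h2, h3, h | ⟨rfl, h⟩ | ⟨hb, h⟩⟩
          · exact hFiso f hf x h
          · exact hFiso f hf u hwu
          · exact hFiso f hf u h
      have hmeas' : meas (mergeGraph G w u) ≤ N := by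
        have := merge_meas_lt (G := G) hwu
        omega
      have hrne : ∀ i, r i ≠ w ∧ r i ≠ u := fun i =>
        ⟨(hrav i).1, fun hc => (hrav i).2.1 (hc.symm ▸ hwu)⟩
      have hr' : IsInducedPathOn (mergeGraph G w u) k r := ipath_congr hr
        (fun i j => merge_adj_iff (hrne i).1 (hrne i).2 (hrne j).1 (hrne j).2)
      have hrav' : AvoidsNF (mergeGraph G w u) w (insert u F) r := by
        intro i
        refine ⟨(hrav i).1, ?_, ?_⟩
        · rw [merge_adj_w hwu (hrne i).1 (hrne i).2]
          rintro (h | h)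
          · exact (hrav i).2.1 h
          · exact hru i h
        · intro hc
          rcases Set.mem_insert_iff.mp hc with hc | hc
          · exact (hrne i).2 hc
          · exact (hrav i).2.2 hc
      obtain ⟨Q, hQ', hQav', hQavoid'⟩ := ih (mergeGraph G w u) k hk w (insert u F)
        hF'iso hmeas' ⟨r, hr', hrav'⟩
      have hQne : ∀ i, Q i ≠ w ∧ Q i ≠ u := fun i =>
        ⟨(hQav' i).1, fun hc => (hQav' i).2.2 (hc ▸ Set.mem_insert u F)⟩
      have hQnadj : ∀ i, ¬ G.Adj w (Q i) ∧ ¬ G.Adj u (Q i) := by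
        intro i
        have h := (hQav' i).2.1
        rw [merge_adj_w hwu (hQne i).1 (hQne i).2] at h
        push_neg at h
        exact h
      have hQ : IsInducedPathOn G k Q := ipath_congr hQ'
        (fun i j => (merge_adj_iff (hQne i).1 (hQne i).2 (hQne j).1 (hQne j).2).symm)
      refine ⟨Q, hQ, ?_, ?_⟩
      · exact fun i => ⟨(hQne i).1, (hQnadj i).1,
          fun hc => (hQav' i).2.2 (Set.mem_insert_of_mem _ hc)⟩
      · intro q hq
        have hQadj0 : G.Adj (q ⟨0, by omega⟩) (Q ⟨0, by omega⟩) := by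
          rw [← ext_mid hq.2 ⟨0, by omega⟩]
          exact ipath_adj hq.1 (show (0:ℕ) + 1 = 0 + 1 from rfl)
        have hQadjl : G.Adj (q ⟨k + 1, by omega⟩) (Q ⟨k - 1, by omega⟩) := by
          rw [← ext_mid hq.2 ⟨k - 1, by omega⟩]
          exact (ipath_adj hq.1 (show k - 1 + 1 + 1 = k + 1 by omega)).symm
        have hqmid : ∀ j : Fin (k + 2), j.val ≠ 0 → j.val ≠ k + 1 → ∃ i : Fin k, q j = Q i := by
          intro j h0 hl
          have hjlt := j.isLt
          refine ⟨⟨j.val - 1, by omega⟩, ?_⟩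
          rw [← ext_mid hq.2 ⟨j.val - 1, by omega⟩]
          congr 1
          exact Fin.ext (show j.val = j.val - 1 + 1 by omega)
        have hqa : ∀ j : Fin (k + 2), q j ≠ w ∧ q j ≠ u := by
          intro j
          by_cases h0 : j.val = 0
          · rw [show j = ⟨0, by omega⟩ from Fin.ext h0]
            constructor
            · intro hc
              rw [hc] at hQadj0
              exact (hQnadj ⟨0, by omega⟩).1 hQadj0
            · intro hc
              rw [hc] at hQadj0
              exact (hQnadj ⟨0, by omega⟩).2 hQadj0
          · by_cases hl : j.val = k + 1
            · rw [show j = ⟨k + 1, by omega⟩ from Fin.ext hl]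
              constructor
              · intro hc
                rw [hc] at hQadjl
                exact (hQnadj ⟨k - 1, by omega⟩).1 hQadjl
              · intro hc
                rw [hc] at hQadjl
                exact (hQnadj ⟨k - 1, by omega⟩).2 hQadjl
            · obtain ⟨i, hi⟩ := hqmid j h0 hl
              rw [hi]
              exact hQne i
        have hq' : IsExtension (mergeGraph G w u) Q q :=
          ⟨ipath_congr hq.1 (fun i j =>
            merge_adj_iff (hqa i).1 (hqa i).2 (hqa j).1 (hqa j).2), hq.2⟩
        obtain ⟨n, c, hc, hcr⟩ := hQavoid' q hq'
        have hcu : u ∉ Set.range c := by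
          rintro ⟨t, ht⟩
          have hn3 := hc.1
          have hadj := icycle_adj hc (i := t)
            (j := ⟨(t.val + 1) % n, Nat.mod_lt _ (by omega)⟩) rfl
          rw [ht] at hadj
          exact huiso _ hadj
        obtain ⟨m, d, hd, hdr⟩ := merge_cycle_lift hwu hc hcu
        refine ⟨m, d, hd, ?_⟩
        rintro z ⟨j, rfl⟩
        exact hdr _ (hcr ⟨j, rfl⟩) (hqa j).1
    · -- Case 2 : every neighbour of w "sees" every admissible path
      have hC1' : ∀ u : V, G.Adj w u → ∀ r : Fin k → V, IsInducedPathOn G k r →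
          AvoidsNF G w F r → ∃ i, G.Adj u (r i) := by
        intro u hu r hr hrav
        by_contra hcon
        push_neg at hcon
        exact hC1 ⟨u, hu, r, hr, hrav, hcon⟩
      set D : Set V := {v | v ≠ w ∧ ¬ G.Adj w v ∧ v ∉ F} with hD
      haveI : Fintype ↥D := Fintype.ofFinite ↥D
      have hwD : w ∉ D := fun hc => hc.1 rfl
      have hmeasH : meas (G.induce D) ≤ N := by
        have := induce_meas_lt G D w hwD
        omega
      have hpD : ∀ i, p i ∈ D := fun i => ⟨(hpav i).1, (hpav i).2.1, (hpav i).2.2⟩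
      have hp' : IsInducedPathOn (G.induce D) k (fun i => ⟨p i, hpD i⟩) := by
        constructor
        · intro a b hab
          exact hp.1 (congrArg Subtype.val hab)
        · intro i j
          exact hp.2 i j
      obtain ⟨Q', hQ'path, hQ'avoid⟩ := Tgen ih (G.induce D) hmeasH k hk ⟨_, hp'⟩
      have hQD : ∀ i, (Q' i : V) ∈ D := fun i => (Q' i).2
      have hQ : IsInducedPathOn G k (fun i => (Q' i : V)) := by
        constructor
        · intro a b hab
          exact hQ'path.1 (Subtype.ext hab)
        · intro i j
          exact hQ'path.2 i j
      refine ⟨fun i => (Q' i : V), hQ, fun i => ⟨(hQD i).1, (hQD i).2.1, (hQD i).2.2⟩, ?_⟩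
      intro q hq
      have hQadj0 : G.Adj (q ⟨0, by omega⟩) (Q' ⟨0, by omega⟩ : V) := by
        rw [← ext_mid hq.2 ⟨0, by omega⟩]
        exact ipath_adj hq.1 (show (0:ℕ) + 1 = 0 + 1 from rfl)
      have hQadjl : G.Adj (q ⟨k + 1, by omega⟩) (Q' ⟨k - 1, by omega⟩ : V) := by
        rw [← ext_mid hq.2 ⟨k - 1, by omega⟩]
        exact (ipath_adj hq.1 (show k - 1 + 1 + 1 = k + 1 by omega)).symm
      have hqmid : ∀ j : Fin (k + 2), j.val ≠ 0 → j.val ≠ k + 1 →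
          ∃ i : Fin k, q j = (Q' i : V) := by
        intro j h0 hl
        have hjlt := j.isLt
        refine ⟨⟨j.val - 1, by omega⟩, ?_⟩
        rw [← ext_mid hq.2 ⟨j.val - 1, by omega⟩]
        congr 1
        exact Fin.ext (show j.val = j.val - 1 + 1 by omega)
      have hqmidD : ∀ j : Fin (k + 2), j.val ≠ 0 → j.val ≠ k + 1 → q j ∈ D := by
        intro j h0 hl
        obtain ⟨i, hi⟩ := hqmid j h0 hl
        rw [hi]
        exact hQD i
      have hxcase : q ⟨0, by omega⟩ ∈ D ∨ G.Adj w (q ⟨0, by omega⟩) := by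
        by_cases hxw : G.Adj w (q ⟨0, by omega⟩)
        · exact Or.inr hxw
        · left
          refine ⟨?_, hxw, ?_⟩
          · intro hc
            rw [hc] at hQadj0
            exact (hQD ⟨0, by omega⟩).2.1 hQadj0
          · intro hc
            exact hFiso _ hc _ hQadj0
      have hycase : q ⟨k + 1, by omega⟩ ∈ D ∨ G.Adj w (q ⟨k + 1, by omega⟩) := by
        by_cases hyw : G.Adj w (q ⟨k + 1, by omega⟩)
        · exact Or.inr hyw
        · left
          refine ⟨?_, hyw, ?_⟩
          · intro hc
            rw [hc] at hQadjl
            exact (hQD ⟨k - 1, by omega⟩).2.1 hQadjl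
          · intro hc
            exact hFiso _ hc _ hQadjl
      rcases hxcase with hxD | hxw <;> rcases hycase with hyD | hyw
      · -- both endpoints in D : use avoidability inside the induced subgraph
        have hqD : ∀ j : Fin (k + 2), q j ∈ D := by
          intro j
          by_cases h0 : j.val = 0
          · rw [show j = ⟨0, by omega⟩ from Fin.ext h0]
            exact hxD
          · by_cases hl : j.val = k + 1
            · rw [show j = ⟨k + 1, by omega⟩ from Fin.ext hl]
              exact hyD
            · exact hqmidD j h0 hl
        have hext' : IsExtension (G.induce D) Q' (fun j => ⟨q j, hqD j⟩) := by
          constructor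
          · constructor
            · intro a b hab
              exact hq.1.1 (congrArg Subtype.val hab)
            · intro i j
              exact hq.1.2 i j
          · intro i
            exact Subtype.ext (hq.2 i)
        obtain ⟨n, c, hc, hcr⟩ := hQ'avoid _ hext'
        refine ⟨n, fun i => (c i : V), ⟨hc.1, ?_, fun i j => hc.2.2 i j⟩, ?_⟩
        · intro a b hab
          exact hc.2.1 (Subtype.ext hab)
        · rintro z ⟨j, rfl⟩
          obtain ⟨t, ht⟩ := hcr ⟨j, rfl⟩
          exact ⟨t, congrArg Subtype.val ht⟩
      · -- x in D, y adjacent to w : contradiction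
        exfalso
        have hwin : IsInducedPathOn G k (fun i : Fin k => q ⟨i.val + 0, by have := i.isLt; omega⟩) :=
          ipath_window (by omega) hq.1
        have hwinav : AvoidsNF G w F (fun i : Fin k => q ⟨i.val + 0, by have := i.isLt; omega⟩) := by
          intro i
          have hilt := i.isLt
          have hmem : q ⟨i.val + 0, by omega⟩ ∈ D := by
            by_cases h0 : i.val = 0
            · rw [show (⟨i.val + 0, by omega⟩ : Fin (k + 2)) = ⟨0, by omega⟩ from
                Fin.ext (show i.val + 0 = 0 by omega)]
              exact hxD
            · exact hqmidD _ (by show i.val + 0 ≠ 0; omega) (by show i.val + 0 ≠ k + 1; omega)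
          exact ⟨hmem.1, hmem.2.1, hmem.2.2⟩
        obtain ⟨i, hi⟩ := hC1' _ hyw _ hwin hwinav
        have hilt := i.isLt
        exact ipath_nadj hq.1 (show k + 1 + 1 ≠ i.val + 0 by omega)
          (show i.val + 0 + 1 ≠ k + 1 by omega) hi
      · -- y in D, x adjacent to w : contradiction
        exfalso
        have hwin : IsInducedPathOn G k (fun i : Fin k => q ⟨i.val + 2, by have := i.isLt; omega⟩) :=
          ipath_window (by omega) hq.1
        have hwinav : AvoidsNF G w F (fun i : Fin k => q ⟨i.val + 2, by have := i.isLt; omega⟩) := by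
          intro i
          have hilt := i.isLt
          have hmem : q ⟨i.val + 2, by omega⟩ ∈ D := by
            by_cases hl : i.val + 2 = k + 1
            · rw [show (⟨i.val + 2, by omega⟩ : Fin (k + 2)) = ⟨k + 1, by omega⟩ from
                Fin.ext (show i.val + 2 = k + 1 by omega)]
              exact hyD
            · exact hqmidD _ (by show i.val + 2 ≠ 0; omega) (by show i.val + 2 ≠ k + 1; omega)
          exact ⟨hmem.1, hmem.2.1, hmem.2.2⟩
        obtain ⟨i, hi⟩ := hC1' _ hxw _ hwin hwinav
        have hilt := i.isLt
        exact ipath_nadj hq.1 (show (0:ℕ) + 1 ≠ i.val + 2 by omega)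
          (show i.val + 2 + 1 ≠ 0 by omega) hi
      · -- both endpoints adjacent to w : direct cycle through w
        apply cycle_ext (show 3 ≤ k + 2 by omega) hq.1 (w := w)
        · exact hxw
        · rw [show (⟨k + 2 - 1, by omega⟩ : Fin (k + 2)) = ⟨k + 1, by omega⟩ from
            Fin.ext (show k + 2 - 1 = k + 1 by omega)]
          exact hyw
        · intro i h0 hl
          have hmem : q i ∈ D := hqmidD i h0 (by omega)
          exact fun hadj => hmem.2.1 hadj
        · rintro ⟨j, hj⟩
          by_cases h0 : j.val = 0
          · rw [show j = ⟨0, by omega⟩ from Fin.ext h0] at hj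
            exact (G.ne_of_adj hxw).symm hj
          · by_cases hl : j.val = k + 1
            · rw [show j = ⟨k + 1, by omega⟩ from Fin.ext hl] at hj
              exact (G.ne_of_adj hyw).symm hj
            · exact (hqmidD j h0 hl).1 hj

end AvoidAux
/-- If a finite graph contains an induced `P_k`, it contains an avoidable induced `P_k`;
consequently containing an induced `P_k` is equivalent to containing an avoidable one. -/
theorem stmt18 [Fintype V] (k : ℕ) (hk : 1 ≤ k) (G : SimpleGraph V) :
    ((∃ p : Fin k → V, IsInducedPathOn G k p) → ∃ p : Fin k → V, IsAvoidable G p) ∧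
    ((∃ p : Fin k → V, IsInducedPathOn G k p) ↔ ∃ p : Fin k → V, IsAvoidable G p) := by
  have main : (∃ p : Fin k → V, IsInducedPathOn G k p) → ∃ p : Fin k → V, IsAvoidable G p := by
    intro hex
    obtain ⟨Q, hQ, hQav⟩ := AvoidAux.Tgen (AvoidAux.mainHF (AvoidAux.meas G)) G
      (le_refl _) k hk hex
    exact ⟨Q, hQ, hQav⟩
  exact ⟨main, main, fun ⟨p, hp⟩ => ⟨p, hp.1⟩⟩
end
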